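/- arXiv:1607.08396 — 11 statements merged into one kernel-verified Lean document; each statement's English description precedes it below -/
import Mathlib

section
/- For every finite colouring of the natural numbers, there exist integers a, b > 1 such that a, b, and a^b all receive the same colour. -/
open Filter Hindman Set

attribute [local instance] Ultrafilter.mul Ultrafilter.add Ultrafilter.semigroup
  Ultrafilter.addSemigroup

namespace ExpTriple

abbrev M := ℕ+

/-- Membership in a product of ultrafilters. -/
theorem mem_mul_iff (U V : Ultrafilter M) (A : Set M) :
    A ∈ U * V ↔ {a : M | {b : M | a * b ∈ A} ∈ V} ∈ U := by
  have := Ultrafilter.eventually_mul U V (· ∈ A)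
  simpa [Filter.eventually_iff] using this

theorem mem_add_iff (U V : Ultrafilter M) (A : Set M) :
    A ∈ U + V ↔ {a : M | {b : M | a + b ∈ A} ∈ V} ∈ U := by
  have := Ultrafilter.eventually_add U V (· ∈ A)
  simpa [Filter.eventually_iff] using this

/-- Pushforward along left multiplication of a sum of ultrafilters. -/
theorem map_mulLeft_add (c : M) (p q : Ultrafilter M) :
    Ultrafilter.map (fun m => c * m) (p + q)
      = Ultrafilter.map (fun m => c * m) p + Ultrafilter.map (fun m => c * m) q := by
  refine Ultrafilter.coe_inj.mp (Filter.ext' fun pr => ?_)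
  simp only [Ultrafilter.coe_map, Filter.eventually_map, Ultrafilter.eventually_add,
    Ultrafilter.coe_map, Filter.eventually_map, mul_add]

theorem pure_mul (a : M) (p : Ultrafilter M) :
    (pure a : Ultrafilter M) * p = Ultrafilter.map (fun m => a * m) p := by
  refine Ultrafilter.coe_inj.mp (Filter.ext' fun pr => ?_)
  simp only [Ultrafilter.eventually_mul, Ultrafilter.coe_map, Filter.eventually_map,
    Ultrafilter.coe_pure, Filter.eventually_pure]

/-- the set of additive idempotent ultrafilters -/
def IdemAdd : Set (Ultrafilter M) := {p | p + p = p}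

theorem idemAdd_nonempty : IdemAdd.Nonempty := by
  obtain ⟨p, hp⟩ := exists_idempotent_of_compact_t2_of_continuous_add_left
    (@Ultrafilter.continuous_add_left M _)
  exact ⟨p, hp⟩

/-- closure membership criterion in ultrafilter space -/
theorem mem_closure_ultra {S : Set (Ultrafilter M)} {x : Ultrafilter M} :
    x ∈ closure S ↔ ∀ A ∈ x, ∃ p ∈ S, A ∈ p := by
  constructor
  · intro hx A hA
    have := (mem_closure_iff.mp hx) _ (ultrafilter_isOpen_basic A) hA
    obtain ⟨p, hp1, hp2⟩ := this
    exact ⟨p, hp2, hp1⟩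
  · intro h
    rw [mem_closure_iff]
    intro O hO hxO
    obtain ⟨t, ⟨A, rfl⟩, hxt, htO⟩ := ultrafilterBasis_is_basis.exists_subset_of_mem_open hxO hO
    obtain ⟨p, hpS, hpA⟩ := h A hxt
    exact ⟨p, htO hpA, hpS⟩

/-- pushforward of an additive idempotent along left multiplication is additive idempotent -/
theorem pure_mul_idem {a : M} {p : Ultrafilter M} (hp : p ∈ IdemAdd) :
    (pure a : Ultrafilter M) * p ∈ IdemAdd := by
  simp only [IdemAdd, mem_setOf_eq] at *
  rw [pure_mul, ← map_mulLeft_add, hp]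

def Lam : Set (Ultrafilter M) := closure IdemAdd

theorem lam_nonempty : Lam.Nonempty :=
  idemAdd_nonempty.mono subset_closure

theorem lam_closed : IsClosed Lam := isClosed_closure

/-- Λ is a left ideal for multiplication -/
theorem lam_mul_mem (q : Ultrafilter M) {x : Ultrafilter M} (hx : x ∈ Lam) :
    q * x ∈ Lam := by
  rw [Lam, mem_closure_ultra]
  intro A hA
  rw [mem_mul_iff] at hA
  obtain ⟨a, ha⟩ := Ultrafilter.nonempty_of_mem hA
  simp only [mem_setOf_eq] at ha
  rw [Lam, mem_closure_ultra] at hx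
  obtain ⟨p, hpS, hpA⟩ := hx _ ha
  refine ⟨pure a * p, pure_mul_idem hpS, ?_⟩
  rw [pure_mul, Ultrafilter.mem_map]
  exact hpA



/-- Family of nonempty closed left ideals contained in Λ. -/
def LIdeals : Set (Set (Ultrafilter M)) :=
  {L | L ⊆ Lam ∧ IsClosed L ∧ L.Nonempty ∧ ∀ q : Ultrafilter M, ∀ m ∈ L, q * m ∈ L}

theorem lam_mem_LIdeals : Lam ∈ LIdeals :=
  ⟨subset_rfl, lam_closed, lam_nonempty, fun q _ hm => lam_mul_mem q hm⟩

theorem exists_minimal_LIdeal : ∃ L, Minimal (· ∈ LIdeals) L := by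
  apply zorn_superset
  intro c hcs hc
  rcases c.eq_empty_or_nonempty with rfl | hcne
  · exact ⟨Lam, lam_mem_LIdeals, by simp⟩
  refine ⟨⋂₀ c, ⟨?_, ?_, ?_, ?_⟩, fun s hs => Set.sInter_subset_of_mem hs⟩
  · obtain ⟨t, ht⟩ := hcne
    exact (Set.sInter_subset_of_mem ht).trans (hcs ht).1
  · exact isClosed_sInter fun t ht => (hcs ht).2.1
  · rw [Set.sInter_eq_iInter]
    haveI : Nonempty c := hcne.coe_sort
    apply IsCompact.nonempty_iInter_of_directed_nonempty_isCompact_isClosed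
      ((↑) : c → Set (Ultrafilter M))
    · exact DirectedOn.directed_val (IsChain.directedOn hc.symm)
    · exact fun i => (hcs i.prop).2.2.1
    · exact fun i => (hcs i.prop).2.1.isCompact
    · exact fun i => (hcs i.prop).2.1
  · intro q m hm
    rw [Set.mem_sInter] at hm ⊢
    exact fun t ht => (hcs ht).2.2.2 q m (hm t ht)

variable {L : Set (Ultrafilter M)} (hL : Minimal (· ∈ LIdeals) L)

theorem exists_idem_in_L (hL : Minimal (· ∈ LIdeals) L) : ∃ u ∈ L, u * u = u := by
  obtain ⟨hsub, hclosed, hne, hideal⟩ := hL.prop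
  exact exists_idempotent_in_compact_subsemigroup Ultrafilter.continuous_mul_left L hne
    hclosed.isCompact (fun x hx y hy => hideal x y hy)

/-- In a minimal left ideal, every element generates the whole ideal. -/
theorem minimal_gen (hL : Minimal (· ∈ LIdeals) L) {m : Ultrafilter M} (hm : m ∈ L)
    {u : Ultrafilter M} (hu : u ∈ L) : ∃ r : Ultrafilter M, r * m = u := by
  obtain ⟨hsub, hclosed, hne, hideal⟩ := hL.prop
  have hrange : Set.range (· * m) ∈ LIdeals := by
    refine ⟨?_, ?_, ⟨m * m, m, rfl⟩, ?_⟩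
    · rintro _ ⟨r, rfl⟩
      exact hsub (hideal r m hm)
    · have : Set.range (· * m) = (· * m) '' Set.univ := by rw [Set.image_univ]
      rw [this]
      exact (isCompact_univ.image (Ultrafilter.continuous_mul_left m)).isClosed
    · rintro q _ ⟨r, rfl⟩
      exact ⟨q * r, mul_assoc q r m⟩
  have hrsub : Set.range (· * m) ⊆ L := by
    rintro _ ⟨r, rfl⟩
    exact hideal r m hm
  have := hL.eq_of_subset hrange hrsub
  rw [← this] at hu
  obtain ⟨r, hr⟩ := hu
  exact ⟨r, hr⟩

/-- Syndeticity: if `Γ ∈ u` where `u` lies in a minimal left ideal, then the set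
`T = {z | z⁻¹Γ ∈ u}` is (multiplicatively) syndetic. -/
theorem syndetic (hL : Minimal (· ∈ LIdeals) L) {u : Ultrafilter M} (hu : u ∈ L)
    {G : Set M} (hG : G ∈ u) :
    ∃ F : Finset M, ∀ n : M, ∃ t ∈ F, {y : M | (t * n) * y ∈ G} ∈ u := by
  by_contra hcon
  push_neg at hcon
  set T : Set M := {z : M | {y : M | z * y ∈ G} ∈ u} with hT
  -- get an ultrafilter q containing all sets {n | t*n ∉ T}
  have hq : ∃ q : Ultrafilter M, ∀ t : M, {n : M | t * n ∉ T} ∈ q := by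
    by_contra hq
    push_neg at hq
    -- the closed sets K t := {q | C t ∈ q} have empty intersection; use compactness
    have hempty : (Set.univ : Set (Ultrafilter M)) ∩
        ⋂ t : M, {q : Ultrafilter M | {n : M | t * n ∉ T} ∈ q} = ∅ := by
      ext q
      simp only [Set.mem_inter_iff, Set.mem_univ, true_and, Set.mem_iInter, Set.mem_empty_iff_false,
        iff_false, not_forall]
      obtain ⟨t, ht⟩ := hq q
      exact ⟨t, ht⟩
    obtain ⟨Fs, hFs⟩ := isCompact_univ.elim_finite_subfamily_closed _
      (fun t : M => ultrafilter_isClosed_basic {n : M | t * n ∉ T}) hempty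
    -- so for the finite set Fs, no single n works for all t; but assumption gives an n
    obtain ⟨n, hn⟩ := hcon Fs
    have : (pure n : Ultrafilter M) ∈ Set.univ ∩ ⋂ t ∈ Fs, {q : Ultrafilter M | {m : M | t * m ∉ T} ∈ q} := by
      refine ⟨Set.mem_univ _, ?_⟩
      simp only [Set.mem_iInter]
      intro t ht
      simp only [Set.mem_setOf_eq, Ultrafilter.mem_pure]
      exact fun h => hn t ht h
    rw [hFs] at this
    exact this
  obtain ⟨q, hqC⟩ := hq
  -- q*u ∈ L, minimality gives r with r*(q*u) = u
  have hqu : q * u ∈ L := hL.prop.2.2.2 q u hu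
  obtain ⟨r, hr⟩ := minimal_gen hL hqu hu
  have hG2 : G ∈ (r * q) * u := by rw [mul_assoc, hr]; exact hG
  rw [mem_mul_iff] at hG2
  have hT2 : T ∈ r * q := hG2
  rw [mem_mul_iff] at hT2
  obtain ⟨b, hb⟩ := Ultrafilter.nonempty_of_mem hT2
  simp only [Set.mem_setOf_eq] at hb
  have := hqC b
  have h2 : {n : M | b * n ∈ T} ∩ {n : M | b * n ∉ T} ∈ q := inter_mem hb this
  obtain ⟨n, hn1, hn2⟩ := Ultrafilter.nonempty_of_mem h2
  exact hn2 hn1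

/-- partial sums of a stream -/
def psum (w : Stream' M) : ℕ → M
  | 0 => w.get 0
  | n + 1 => psum w n + w.get (n + 1)

theorem seg (w : Stream' M) : ∀ d i : ℕ, ∃ v ∈ FS (w.drop (i + 1)),
    psum w i + v = psum w (i + d + 1) := by
  intro d
  induction d with
  | zero =>
    intro i
    refine ⟨(w.drop (i + 1)).head, FS.head _, ?_⟩
    rw [Stream'.head_drop]
    rfl
  | succ d ih =>
    intro i
    obtain ⟨v', hv', hid⟩ := ih (i + 1)
    have htail : (w.drop (i + 1)).tail = w.drop (i + 2) := by
      rw [Stream'.tail_eq_drop, Stream'.drop_drop]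
    refine ⟨(w.drop (i + 1)).head + v', ?_, ?_⟩
    · apply FS.cons
      rw [htail]
      exact hv'
    · rw [Stream'.head_drop, ← add_assoc]
      have : psum w i + w.get (i + 1) = psum w (i + 1) := rfl
      rw [this, hid]
      congr 1
      omega

/-- the 2-power map -/
def pw (n : M) : M := (2 : M) ^ (n : ℕ)

theorem pw_add (a b : M) : pw (a + b) = pw a * pw b := by
  simp [pw, PNat.add_coe, pow_add]

/-- Main combinatorial theorem over ℕ+. -/
theorem key (k : ℕ) (E : M → Fin k) :
    ∃ x v : M, E x = E v ∧ E x = E (x * pw v) := by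
  obtain ⟨L, hL⟩ := exists_minimal_LIdeal
  obtain ⟨u, huL, huid⟩ := exists_idem_in_L hL
  -- find the colour class of u
  have hcov : (⋃ c : Fin k, {n : M | E n = c}) ∈ u := by
    have : (⋃ c : Fin k, {n : M | E n = c}) = Set.univ := by
      ext n; simp
    rw [this]; exact univ_mem
  have hex : ∃ c : Fin k, {n : M | E n = c} ∈ u := by
    rw [← Set.sUnion_range] at hcov
    obtain ⟨t, ⟨c, rfl⟩, htu⟩ := (Ultrafilter.finite_sUnion_mem_iff (Set.finite_range _)).mp hcov
    exact ⟨c, htu⟩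
  obtain ⟨c, hΓu⟩ := hex
  set Γ : Set M := {n : M | E n = c} with hΓ
  -- u ∈ Λ, so Γ belongs to some additive idempotent; Hindman gives an FS-set in Γ
  have huLam : u ∈ Lam := hL.prop.1 huL
  obtain ⟨p, hpIdem, hΓp⟩ := mem_closure_ultra.mp huLam Γ hΓu
  obtain ⟨w, hw⟩ := Hindman.exists_FS_of_large p hpIdem Γ hΓp
  -- syndeticity
  obtain ⟨F, hF⟩ := syndetic hL huL hΓu
  -- pigeonhole on partial sums
  have hchoice : ∀ j : ℕ, ∃ t ∈ F, {y : M | (t * pw (psum w j)) * y ∈ Γ} ∈ u := fun j =>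
    hF (pw (psum w j))
  choose tf htfF htfu using hchoice
  have hcard : F.card < (Finset.range (F.card + 1)).card := by
    simp
  obtain ⟨i, hi, j, hj, hij, hte⟩ := Finset.exists_ne_map_eq_of_card_lt_of_maps_to hcard
    (fun a _ => htfF a)
  -- wlog i < j
  wlog hlt : i < j generalizing i j
  · exact this j hj i hi hij.symm hte.symm (by omega)
  obtain ⟨d, rfl⟩ : ∃ d, j = i + d + 1 := ⟨j - i - 1, by omega⟩
  obtain ⟨v, hvFS, hvsum⟩ := seg w d i
  have hvΓ : v ∈ Γ := hw (FS_iter_tail_sub_FS w (i + 1) hvFS)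
  -- intersect the two u-large sets
  have h1 : {y : M | (tf i * pw (psum w i)) * y ∈ Γ} ∈ u := htfu i
  have h2 : {y : M | (tf i * pw (psum w (i + d + 1))) * y ∈ Γ} ∈ u := by
    rw [hte]; exact htfu (i + d + 1)
  obtain ⟨y, hy1, hy2⟩ := Ultrafilter.nonempty_of_mem (inter_mem h1 h2)
  simp only [Set.mem_setOf_eq] at hy1 hy2
  refine ⟨tf i * pw (psum w i) * y, v, ?_, ?_⟩
  · -- E x = E v : both equal c
    have hx : E (tf i * pw (psum w i) * y) = c := hy1
    have hv : E v = c := hvΓ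
    rw [hx, hv]
  · -- E x = E (x * pw v)
    have hkey : (tf i * pw (psum w i) * y) * pw v = tf i * pw (psum w (i + d + 1)) * y := by
      have hpw : pw (psum w i) * pw v = pw (psum w (i + d + 1)) := by
        rw [← pw_add, hvsum]
      calc (tf i * pw (psum w i) * y) * pw v
          = tf i * pw (psum w i) * (y * pw v) := by rw [mul_assoc]
        _ = tf i * pw (psum w i) * (pw v * y) := by rw [mul_comm y]
        _ = tf i * (pw (psum w i) * pw v) * y := by rw [← mul_assoc, mul_assoc (tf i)]
        _ = tf i * pw (psum w (i + d + 1)) * y := by rw [hpw]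
    rw [hkey]
    have hx : E (tf i * pw (psum w i) * y) = c := hy1
    have hx2 : E (tf i * pw (psum w (i + d + 1)) * y) = c := hy2
    rw [hx, hx2]

end ExpTriple

/-- For every finite colouring of ℕ there exist a, b > 1 with a, b, a^b monochromatic. -/
theorem exp_triple_partition_regular (k : ℕ) (f : ℕ → Fin k) :
    ∃ a b : ℕ, 1 < a ∧ 1 < b ∧ f a = f b ∧ f a = f (a ^ b) := by
  obtain ⟨x, v, h1, h2⟩ := ExpTriple.key k (fun n : ℕ+ => f (2 ^ (n : ℕ)))
  refine ⟨2 ^ (x : ℕ), 2 ^ (v : ℕ), ?_, ?_, ?_, ?_⟩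
  · exact Nat.one_lt_two_pow_iff.mpr x.pos.ne'
  · exact Nat.one_lt_two_pow_iff.mpr v.pos.ne'
  · exact h1
  · rw [← pow_mul]
    have hco : ((x * ExpTriple.pw v : ℕ+) : ℕ) = (x : ℕ) * 2 ^ (v : ℕ) := by
      simp [ExpTriple.pw, PNat.mul_coe, PNat.pow_coe]
    rw [← hco]
    exact h2
end

section
/- For every m and k, there exists N = N(k,m) such that every k-colouring of the powerset of {1,...,N} admits subsets A_1, ..., A_m of {1,...,N} with max A_i < min A_{i+1} for each i < m, such that the family of all nonempty unions of the A_i is monochromatic. -/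
namespace OFU

/-- binary support of a natural number -/
def supp (n : ℕ) : Finset ℕ := (Finset.range n).filter (fun i => n.testBit i = true)

lemma mem_supp {n i : ℕ} : i ∈ supp n ↔ n.testBit i = true := by
  constructor
  · intro h; exact (Finset.mem_filter.1 h).2
  · intro h
    refine Finset.mem_filter.2 ⟨Finset.mem_range.2 ?_, h⟩
    by_contra hn
    push_neg at hn
    have h2 : n < 2 ^ i := lt_of_le_of_lt hn (Nat.lt_two_pow_self (n := i))
    simp [Nat.testBit_eq_false_of_lt h2] at h

lemma lt_of_mem_supp {n i : ℕ} (h : i ∈ supp n) : i < n :=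
  Finset.mem_range.1 (Finset.mem_filter.1 h).1

lemma supp_nonempty {n : ℕ} (h : n ≠ 0) : (supp n).Nonempty := by
  obtain ⟨i, hi, -⟩ := Nat.exists_most_significant_bit h
  exact ⟨i, mem_supp.2 hi⟩

lemma div_mul_pow {M i z : ℕ} (hi : i < M) : 2 ^ M * z / 2 ^ i = 2 * (2 ^ (M - i - 1) * z) := by
  rw [show 2 ^ M = 2 ^ i * (2 * 2 ^ (M - i - 1)) by rw [← pow_succ', ← pow_add]; congr 1; omega,
    mul_assoc, Nat.mul_div_cancel_left _ (by positivity : (0:ℕ) < 2 ^ i), mul_assoc]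

lemma testBit_eq_false_of_dvd {M y i : ℕ} (h : 2 ^ M ∣ y) (hi : i < M) :
    y.testBit i = false := by
  obtain ⟨z, rfl⟩ := h
  rw [Nat.testBit_eq_decide_div_mod_eq, div_mul_pow hi]
  simp [Nat.mul_mod_right]

lemma le_of_mem_supp_of_dvd {M y i : ℕ} (h : 2 ^ M ∣ y) (hi : i ∈ supp y) : M ≤ i := by
  by_contra hn
  push_neg at hn
  rw [mem_supp, testBit_eq_false_of_dvd h hn] at hi
  exact Bool.false_ne_true hi

lemma testBit_add {x y M : ℕ} (hx : x < 2 ^ M) (hy : 2 ^ M ∣ y) (i : ℕ) :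
    (x + y).testBit i = (x.testBit i || y.testBit i) := by
  obtain ⟨z, rfl⟩ := hy
  rcases lt_or_ge i M with hiM | hiM
  · -- low bits: from x
    rw [testBit_eq_false_of_dvd (Dvd.intro z rfl) hiM, Bool.or_false,
      Nat.testBit_eq_decide_div_mod_eq, Nat.testBit_eq_decide_div_mod_eq]
    have h1 : (x + 2 ^ M * z) / 2 ^ i = x / 2 ^ i + 2 * (2 ^ (M - i - 1) * z) := by
      have e : (2:ℕ) ^ M = 2 ^ i * (2 * 2 ^ (M - i - 1)) := by
        rw [← pow_succ', ← pow_add]; congr 1; omega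
      rw [e, mul_assoc, ← mul_assoc 2 _ z,
        Nat.add_mul_div_left _ _ (by positivity : (0:ℕ) < 2 ^ i), mul_assoc]
    rw [h1, Nat.add_mul_mod_self_left]
  · -- high bits: from y
    have hxb : x.testBit i = false :=
      Nat.testBit_eq_false_of_lt (lt_of_lt_of_le hx (Nat.pow_le_pow_right (by norm_num) hiM))
    rw [hxb, Bool.false_or, Nat.testBit_eq_decide_div_mod_eq, Nat.testBit_eq_decide_div_mod_eq]
    have hsplit : (2:ℕ) ^ i = 2 ^ M * 2 ^ (i - M) := by rw [← pow_add]; congr 1; omega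
    have h1 : (x + 2 ^ M * z) / 2 ^ i = z / 2 ^ (i - M) := by
      rw [hsplit, ← Nat.div_div_eq_div_mul, Nat.add_mul_div_left _ _
        (by positivity : (0:ℕ) < 2 ^ M), Nat.div_eq_of_lt hx, zero_add]
    have h2 : 2 ^ M * z / 2 ^ i = z / 2 ^ (i - M) := by
      rw [hsplit, ← Nat.div_div_eq_div_mul, Nat.mul_div_cancel_left _
        (by positivity : (0:ℕ) < 2 ^ M)]
    rw [h1, h2]

lemma supp_add {x y M : ℕ} (hx : x < 2 ^ M) (hy : 2 ^ M ∣ y) :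
    supp (x + y) = supp x ∪ supp y := by
  ext i
  simp [mem_supp, Finset.mem_union, testBit_add hx hy]



lemma pigeon (g : ℕ → ℕ) (n L : ℕ) (hL : 0 < L) :
    ∃ l r : ℕ, n ≤ l ∧ l < r ∧ L ∣ ∑ t ∈ Finset.Ico l r, g t := by
  have hcard : Fintype.card (Fin L) < Fintype.card (Fin (L + 1)) := by simp
  obtain ⟨j, j', hne, heq⟩ := Fintype.exists_ne_map_eq_of_card_lt
    (fun j : Fin (L + 1) => (⟨(∑ t ∈ Finset.Ico n (n + (j : ℕ)), g t) % L, Nat.mod_lt _ hL⟩ : Fin L))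
    hcard
  wlog hlt : (j : ℕ) < (j' : ℕ) generalizing j j'
  · exact this j' j hne.symm heq.symm (by omega)
  refine ⟨n + (j : ℕ), n + (j' : ℕ), Nat.le_add_right _ _, by omega, ?_⟩
  have hsplit : ∑ t ∈ Finset.Ico n (n + (j:ℕ)), g t + ∑ t ∈ Finset.Ico (n + (j:ℕ)) (n + (j':ℕ)), g t
      = ∑ t ∈ Finset.Ico n (n + (j':ℕ)), g t :=
    Finset.sum_Ico_consecutive _ (by omega) (by omega)
  have hmod : (∑ t ∈ Finset.Ico n (n + (j:ℕ)), g t) % L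
      = (∑ t ∈ Finset.Ico n (n + (j':ℕ)), g t) % L := by
    have := congrArg (Fin.val) heq
    simpa using this
  have hB : (∑ t ∈ Finset.Ico (n + (j:ℕ)) (n + (j':ℕ)), g t)
      = (∑ t ∈ Finset.Ico n (n + (j':ℕ)), g t) - (∑ t ∈ Finset.Ico n (n + (j:ℕ)), g t) := by
    omega
  rw [hB]
  apply Nat.dvd_of_mod_eq_zero
  exact Nat.sub_mod_eq_zero_of_mod_eq hmod.symm

lemma pnat_sum_mem_FS (a : Stream' ℕ+) (T : Finset ℕ) (hT : T.Nonempty) (x : ℕ+)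
    (hx : (x : ℕ) = ∑ t ∈ T, (a.get t : ℕ)) : x ∈ Hindman.FS a := by
  have key : ∀ (n : ℕ) (a : Stream' ℕ+) (T : Finset ℕ), T.card ≤ n → T.Nonempty → ∀ x : ℕ+,
      (x : ℕ) = ∑ t ∈ T, (a.get t : ℕ) → x ∈ Hindman.FS a := by
    intro n
    induction n with
    | zero => intro a T hc hne x hx; simp [Finset.card_eq_zero.1 (Nat.le_zero.1 hc)] at hne
    | succ n ih =>
      intro a T hc hne x hx
      set i := T.min' hne with hi
      have hiT : i ∈ T := T.min'_mem hne
      rcases (T.erase i).eq_empty_or_nonempty with he | hne'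
      · have hT1 : T = {i} := by
          apply Finset.eq_singleton_iff_unique_mem.2
          exact ⟨hiT, fun y hy => by
            by_contra hyn
            exact (Finset.notMem_empty y) (he ▸ Finset.mem_erase.2 ⟨hyn, hy⟩)⟩
        have : x = a.get i := by
          apply PNat.coe_injective
          rw [hx, hT1, Finset.sum_singleton]
        rw [this]
        exact Hindman.FS.singleton a i
      · have hge : ∀ t ∈ T.erase i, i + 1 ≤ t := by
          intro t ht
          have h1 := T.min'_le t (Finset.mem_of_mem_erase ht)
          have h2 := (Finset.mem_erase.1 ht).1
          omega
        set T'' := (T.erase i).image (fun t => t - (i + 1)) with hT''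
        have hsum' : ∑ s ∈ T'', ((a.drop (i+1)).get s : ℕ) = ∑ t ∈ T.erase i, (a.get t : ℕ) := by
          rw [hT'', Finset.sum_image (by intro u hu v hv huv; simp only at huv; have := hge u hu; have := hge v hv; omega)]
          apply Finset.sum_congr rfl
          intro t ht
          rw [Stream'.get_drop]
          congr 2
          have := hge t ht
          omega
        have hpos : 0 < ∑ t ∈ T.erase i, (a.get t : ℕ) :=
          Finset.sum_pos (fun t _ => (a.get t).2) hne'
        set y : ℕ+ := ⟨∑ t ∈ T.erase i, (a.get t : ℕ), hpos⟩ with hy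
        have hyFS : y ∈ Hindman.FS (a.drop (i+1)) := by
          apply ih (a.drop (i+1)) T'' ?_ (hne'.image _) y hsum'.symm
          calc T''.card ≤ (T.erase i).card := Finset.card_image_le
            _ ≤ n := by
              have := Finset.card_erase_of_mem hiT
              omega
        have hdrop : (a.drop i).tail = a.drop (i+1) := by
          rw [Stream'.tail_eq_drop, Stream'.drop_drop, add_comm]
        have hxy : x = (a.drop i).head + y := by
          apply PNat.coe_injective
          rw [PNat.add_coe, Stream'.head_drop, hx, hy]
          exact (Finset.add_sum_erase _ _ hiT).symm
        rw [hxy]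
        apply Hindman.FS_iter_tail_sub_FS a i
        exact Hindman.FS.cons _ _ (hdrop ▸ hyFS)
  exact key T.card a T le_rfl hT x hx

lemma pigeon' (g : ℕ → ℕ) (n L : ℕ) (hL : 0 < L) :
    ∃ p : ℕ × ℕ, n ≤ p.1 ∧ p.1 < p.2 ∧ L ∣ ∑ t ∈ Finset.Ico p.1 p.2, g t := by
  obtain ⟨l, r, h⟩ := pigeon g n L hL
  exact ⟨(l, r), h⟩

/-- value of a block -/
def bval (a : Stream' ℕ+) (p : ℕ × ℕ) : ℕ := ∑ t ∈ Finset.Ico p.1 p.2, (a.get t : ℕ)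

/-- blocks of indices, chosen so that consecutive block values have increasing binary supports -/
noncomputable def blk (a : Stream' ℕ+) : ℕ → ℕ × ℕ
  | 0 => Classical.choose (pigeon' (fun t => (a.get t : ℕ)) 0 1 one_pos)
  | i + 1 => Classical.choose (pigeon' (fun t => (a.get t : ℕ)) (blk a i).2
      (2 ^ bval a (blk a i)) (by positivity))

/-- block values -/
noncomputable def bb (a : Stream' ℕ+) (i : ℕ) : ℕ := bval a (blk a i)

lemma blk_lt (a : Stream' ℕ+) (i : ℕ) : (blk a i).1 < (blk a i).2 := by
  cases i with
  | zero => exact (Classical.choose_spec (pigeon' (fun t => (a.get t : ℕ)) 0 1 one_pos)).2.1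
  | succ i => exact (Classical.choose_spec (pigeon' (fun t => (a.get t : ℕ)) (blk a i).2
      (2 ^ bval a (blk a i)) (by positivity))).2.1

lemma blk_succ (a : Stream' ℕ+) (i : ℕ) :
    (blk a i).2 ≤ (blk a (i+1)).1 ∧ 2 ^ bb a i ∣ bb a (i+1) := by
  have h := Classical.choose_spec (pigeon' (fun t => (a.get t : ℕ)) (blk a i).2
      (2 ^ bval a (blk a i)) (by positivity))
  exact ⟨h.1, h.2.2⟩

lemma bb_pos (a : Stream' ℕ+) (i : ℕ) : 0 < bb a i :=
  Finset.sum_pos (fun t _ => (a.get t).2) (Finset.nonempty_Ico.2 (blk_lt a i))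

lemma blk_chain (a : Stream' ℕ+) {i j : ℕ} (h : i < j) : (blk a i).2 ≤ (blk a j).1 := by
  induction j with
  | zero => omega
  | succ j ih =>
    rcases Nat.lt_succ_iff_lt_or_eq.1 h with h' | h'
    · exact le_trans (ih h') (le_trans (le_of_lt (blk_lt a j)) (blk_succ a j).1)
    · subst h'; exact (blk_succ a i).1

lemma bb_lt_succ (a : Stream' ℕ+) (i : ℕ) : bb a i < bb a (i+1) :=
  lt_of_lt_of_le Nat.lt_two_pow_self (Nat.le_of_dvd (bb_pos a _) (blk_succ a i).2)

lemma bb_mono (a : Stream' ℕ+) {i j : ℕ} (h : i ≤ j) : bb a i ≤ bb a j := by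
  induction h with
  | refl => exact le_rfl
  | step h ih => exact le_trans ih (le_of_lt (bb_lt_succ a _))

lemma blk_dvd (a : Stream' ℕ+) {i j : ℕ} (h : i < j) : 2 ^ bb a i ∣ bb a j := by
  induction j with
  | zero => omega
  | succ j ih =>
    rcases Nat.lt_succ_iff_lt_or_eq.1 h with h' | h'
    · exact dvd_trans (pow_dvd_pow 2 (bb_mono a (le_of_lt h'))) (blk_succ a j).2
    · subst h'; exact (blk_succ a i).2

lemma supp_sum (a : Stream' ℕ+) (I : Finset ℕ) (hI : I.Nonempty) :
    supp (∑ i ∈ I, bb a i) = I.sup (fun i => supp (bb a i)) := by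
  classical
  have key : ∀ (n : ℕ) (I : Finset ℕ), I.card ≤ n → I.Nonempty →
      supp (∑ i ∈ I, bb a i) = I.sup (fun i => supp (bb a i)) := by
    intro n
    induction n with
    | zero => intro I hc hne; simp [Finset.card_eq_zero.1 (Nat.le_zero.1 hc)] at hne
    | succ n ih =>
      intro I hc hne
      set i0 := I.min' hne with hi0
      have hiI : i0 ∈ I := I.min'_mem hne
      rcases (I.erase i0).eq_empty_or_nonempty with he | hne'
      · have hI1 : I = {i0} := by
          apply Finset.eq_singleton_iff_unique_mem.2
          exact ⟨hiI, fun y hy => by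
            by_contra hyn
            exact (Finset.notMem_empty y) (he ▸ Finset.mem_erase.2 ⟨hyn, hy⟩)⟩
        rw [hI1, Finset.sum_singleton, Finset.sup_singleton]
      · have hgt : ∀ j ∈ I.erase i0, i0 < j := by
          intro j hj
          have h1 := I.min'_le j (Finset.mem_of_mem_erase hj)
          have h2 := (Finset.mem_erase.1 hj).1
          omega
        have hdvd : 2 ^ bb a i0 ∣ ∑ j ∈ I.erase i0, bb a j :=
          Finset.dvd_sum (fun j hj => blk_dvd a (hgt j hj))
        have hins : I = insert i0 (I.erase i0) := (Finset.insert_erase hiI).symm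
        rw [hins, Finset.sum_insert (Finset.notMem_erase _ _),
          Finset.sup_insert,
          supp_add Nat.lt_two_pow_self hdvd,
          ih (I.erase i0) (by have := Finset.card_erase_of_mem hiI; omega) hne',
          Finset.sup_eq_union]
  exact key I.card I le_rfl hI

lemma sum_blocks (a : Stream' ℕ+) (I : Finset ℕ) :
    ∑ i ∈ I, bb a i
      = ∑ t ∈ I.biUnion (fun i => Finset.Ico (blk a i).1 (blk a i).2), (a.get t : ℕ) := by
  classical
  rw [Finset.sum_biUnion]
  · rfl
  · intro i hi j hj hij
    wlog hlt : i < j generalizing i j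
    · have hlt' : j < i := by omega
      exact (this hj hi hij.symm hlt').symm
    have := blk_chain a hlt
    simp only [Finset.disjoint_left]
    intro t ht ht'
    rw [Finset.mem_Ico] at ht ht'
    omega

theorem infinite_unions {k : ℕ} (F : Finset ℕ → Fin k) :
    ∃ (A : ℕ → Finset ℕ) (c : Fin k), (∀ i, (A i).Nonempty) ∧
      (∀ i j, i < j → ∀ x ∈ A i, ∀ y ∈ A j, x < y) ∧
      ∀ I : Finset ℕ, I.Nonempty → F (I.sup A) = c := by
  classical
  obtain ⟨C, hCmem, a, hFS⟩ := Hindman.exists_FS_of_finite_cover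
    (Set.range (fun c : Fin k => {n : ℕ+ | F (supp (n : ℕ)) = c})) (Set.finite_range _)
    (by intro n _; exact Set.mem_sUnion.2 ⟨_, Set.mem_range_self (F (supp (n : ℕ))), rfl⟩)
  obtain ⟨c, rfl⟩ := hCmem
  refine ⟨fun i => supp (bb a i), c, ?_, ?_, ?_⟩
  · intro i; exact supp_nonempty (bb_pos a i).ne'
  · intro i j hij x hx y hy
    exact lt_of_lt_of_le (lt_of_mem_supp hx) (le_of_mem_supp_of_dvd (blk_dvd a hij) hy)
  · intro I hI
    have h1 : I.sup (fun i => supp (bb a i)) = supp (∑ i ∈ I, bb a i) := (supp_sum a I hI).symm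
    rw [h1]
    have hpos : 0 < ∑ i ∈ I, bb a i := Finset.sum_pos (fun i _ => bb_pos a i) hI
    have hbne : (I.biUnion (fun i => Finset.Ico (blk a i).1 (blk a i).2)).Nonempty := by
      obtain ⟨i0, hi0⟩ := hI
      exact ⟨(blk a i0).1, Finset.mem_biUnion.2 ⟨i0, hi0, Finset.mem_Ico.2
        ⟨le_refl _, blk_lt a i0⟩⟩⟩
    have hmem : (⟨∑ i ∈ I, bb a i, hpos⟩ : ℕ+) ∈ Hindman.FS a :=
      pnat_sum_mem_FS a _ hbne _ (sum_blocks a I)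
    exact hFS hmem

end OFU

open OFU in
/-- Ordered finite unions theorem: every k-colouring of the powerset of [N]
admits ordered sets A_1 < ⋯ < A_m all of whose nonempty unions are monochromatic. -/
theorem ordered_finite_unions (m k : ℕ) :
    ∃ N : ℕ, ∀ F : Finset ℕ → Fin k,
      ∃ A : Fin m → Finset ℕ,
        (∀ i, A i ⊆ Finset.Icc 1 N) ∧
        (∀ i, (A i).Nonempty) ∧
        (∀ i j : Fin m, i < j → ∀ x ∈ A i, ∀ y ∈ A j, x < y) ∧
        ∃ c : Fin k, ∀ I : Finset (Fin m), I.Nonempty → F (I.sup A) = c := by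
  classical
  by_contra hcon
  push_neg at hcon
  choose Fb hFb using hcon
  set U := Filter.hyperfilter ℕ with hU
  have hG : ∀ X : Finset ℕ, ∃ c : Fin k, {N : ℕ | Fb N X = c} ∈ U := by
    intro X
    have hsU : ⋃₀ (Set.range fun c : Fin k => {N : ℕ | Fb N X = c}) ∈ U := by
      have : ⋃₀ (Set.range fun c : Fin k => {N : ℕ | Fb N X = c}) = Set.univ := by
        ext N
        simp only [Set.mem_sUnion, Set.mem_range, Set.mem_univ, iff_true]
        exact ⟨_, ⟨Fb N X, rfl⟩, rfl⟩
      rw [this]; exact Filter.univ_mem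
    obtain ⟨t, ⟨c, rfl⟩, htU⟩ := (Ultrafilter.finite_sUnion_mem_iff
      ((Set.finite_range _))).1 hsU
    exact ⟨c, htU⟩
  choose G hGspec using hG
  obtain ⟨A, c, hne, hord, hmono⟩ := infinite_unions (fun X => G (X.image (· + 1)))
  set At : ℕ → Finset ℕ := fun i => (A i).image (· + 1) with hAt
  set A' : Fin m → Finset ℕ := fun i => At i.val with hA'
  have himg : ∀ (I : Finset ℕ), I.sup At = (I.sup A).image (· + 1) := by
    intro I
    exact (Finset.comp_sup_eq_sup_comp (Finset.image (· + 1))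
      (fun x y => Finset.image_union _ _) (Finset.image_empty _)).symm
  have hmono' : ∀ I : Finset (Fin m), I.Nonempty → G (I.sup A') = c := by
    intro I hI
    have h1 : I.sup A' = (I.image Fin.val).sup At := by
      rw [Finset.sup_image]; rfl
    rw [h1, himg]
    exact hmono (I.image Fin.val) (hI.image _)
  set N0 := Finset.univ.sup (fun i : Fin m => (A' i).sup id) with hN0
  have hbig : (Set.Ioi N0 ∩
      ⋂ I ∈ (Finset.univ : Finset (Finset (Fin m))), {N : ℕ | Fb N (I.sup A') = G (I.sup A')})
      ∈ U := by
    apply Filter.inter_mem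
    · apply Filter.hyperfilter_le_cofinite
      rw [Filter.mem_cofinite]
      simpa using Set.finite_Iic N0
    · exact (Filter.biInter_finset_mem _).2 (fun I _ => hGspec _)
  obtain ⟨N, hN1, hN2⟩ := Ultrafilter.nonempty_of_mem hbig
  rw [Set.mem_Ioi] at hN1
  have hsub : ∀ i : Fin m, A' i ⊆ Finset.Icc 1 N := by
    intro i x hx
    rw [Finset.mem_Icc]
    constructor
    · obtain ⟨y, -, rfl⟩ := Finset.mem_image.1 hx
      omega
    · have h1 : x ≤ (A' i).sup id := Finset.le_sup (f := id) hx
      have h2 : (A' i).sup id ≤ N0 := by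
        rw [hN0]; exact Finset.le_sup (f := fun i : Fin m => (A' i).sup id) (Finset.mem_univ i)
      omega
  have hne' : ∀ i : Fin m, (A' i).Nonempty := fun i => (hne _).image _
  have hord' : ∀ i j : Fin m, i < j → ∀ x ∈ A' i, ∀ y ∈ A' j, x < y := by
    intro i j hij x hx y hy
    obtain ⟨u, hu, rfl⟩ := Finset.mem_image.1 hx
    obtain ⟨v, hv, rfl⟩ := Finset.mem_image.1 hy
    have := hord i.val j.val hij u hu v hv
    omega
  obtain ⟨I, hInem, hIneq⟩ := hFb N A' hsub hne' hord' c
  apply hIneq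
  have hNin : Fb N (I.sup A') = G (I.sup A') := by
    have := Set.mem_iInter₂.1 hN2 I (Finset.mem_univ I)
    exact this
  rw [hNin, hmono' I hInem]
end

section
/- For every k and m there exists an integer N(k,m) such that every k-colouring of {1,...,N(k,m)} admits x_1,...,x_m in {1,...,N(k,m)} such that the finite sum set FS(x_1,...,x_m) is monochromatic. -/
open Filter

lemma ultra_fiber {α : Type*} [Finite α] [Nonempty α] (U : Ultrafilter ℕ) (h : ℕ → α) :
    ∃ v, {n | h n = v} ∈ U := by
  by_contra hc
  push_neg at hc
  have h1 : ∀ v : α, {n | h n = v}ᶜ ∈ U := fun v =>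
    Ultrafilter.compl_mem_iff_notMem.2 (hc v)
  have h2 : (⋂ v : α, {n | h n = v}ᶜ) ∈ U := (Filter.iInter_mem).2 h1
  have h3 : (⋂ v : α, {n | h n = v}ᶜ) = ∅ := by ext n; simp
  rw [h3] at h2
  exact U.neBot.ne (Filter.empty_mem_iff_bot.1 h2)

lemma finitize {k : ℕ} [Nonempty (Fin k)] (P : ℕ → (ℕ → Fin k) → Prop)
    (mono : ∀ {N N'} (g : ℕ → Fin k), N ≤ N' → P N g → P N' g)
    (loc : ∀ (N : ℕ) (g g' : ℕ → Fin k), (∀ n ≤ N, g n = g' n) → P N g → P N g')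
    (H : ∀ g, ∃ N, P N g) : ∃ N, ∀ g, P N g := by
  by_contra hc
  push_neg at hc
  choose f hf using hc
  set U := Filter.hyperfilter ℕ with hU
  have hg : ∀ n : ℕ, ∃ v, {N | f N n = v} ∈ U := fun n => ultra_fiber U (fun N => f N n)
  choose g hgmem using hg
  obtain ⟨N0, hN0⟩ := H g
  have hfin : {N | ∀ n ≤ N0, f N n = g n} ∈ U := by
    have he : {N | ∀ n ≤ N0, f N n = g n} = ⋂ n ∈ Finset.range (N0+1), {N | f N n = g n} := by
      ext N; simp [Nat.lt_succ_iff]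
    rw [he]
    exact (Filter.biInter_finset_mem _).2 fun n _ => hgmem n
  have hbig : {N | N0 ≤ N} ∈ U := by
    have hc' : {N | N0 ≤ N} ∈ (Filter.cofinite : Filter ℕ) := by
      rw [Filter.mem_cofinite]
      exact (Set.finite_Iio N0).subset (by intro x; simp)
    exact Filter.hyperfilter_le_cofinite hc'
  have hne : ({N | ∀ n ≤ N0, f N n = g n} ∩ {N | N0 ≤ N}).Nonempty :=
    Ultrafilter.nonempty_of_mem (Filter.inter_mem hfin hbig)
  obtain ⟨N, hN1, hN2⟩ := hne
  exact hf N (mono (f N) hN2 (loc N0 g (f N) (fun n hn => (hN1 n hn).symm) hN0))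

lemma vdW_fin (k L : ℕ) [Nonempty (Fin k)] : ∃ W : ℕ, ∀ g : ℕ → Fin k,
    ∃ a d : ℕ, ∃ c : Fin k, 1 ≤ a ∧ 1 ≤ d ∧ a + L * d ≤ W ∧ ∀ s ≤ L, g (a + s * d) = c := by
  have := finitize (k := k)
    (P := fun W g => ∃ a d : ℕ, ∃ c : Fin k,
      1 ≤ a ∧ 1 ≤ d ∧ a + L * d ≤ W ∧ ∀ s ≤ L, g (a + s * d) = c)
    ?_ ?_ ?_
  · exact this
  · rintro N N' g hNN' ⟨a, d, c, h1, h2, h3, h4⟩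
    exact ⟨a, d, c, h1, h2, h3.trans hNN', h4⟩
  · rintro N g g' hagree ⟨a, d, c, h1, h2, h3, h4⟩
    refine ⟨a, d, c, h1, h2, h3, fun s hs => ?_⟩
    rw [← hagree _ (le_trans (by nlinarith [Nat.mul_le_mul_right d hs]) h3)]
    exact h4 s hs
  · intro g
    obtain ⟨a, ha, b, c, hcopy⟩ :=
      Combinatorics.exists_mono_homothetic_copy (Finset.Icc 1 (L + 1)) g
    refine ⟨a + b + L * a, a + b, a, c, le_trans ha (Nat.le_add_right a b), ha, le_refl _, fun s hs => ?_⟩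
    have := hcopy (s + 1) (by simp [Nat.succ_le_succ hs])
    simpa [smul_eq_mul, Nat.mul_add, Nat.mul_comm, Nat.add_comm, Nat.add_left_comm,
      Nat.add_assoc] using this

lemma folkman_max (k : ℕ) [Nonempty (Fin k)] (m : ℕ) : ∃ B : ℕ, ∀ g : ℕ → Fin k,
    ∃ x : ℕ → ℕ, ∃ c : ℕ → Fin k,
      (∀ i < m, 1 ≤ x i) ∧ (∑ i ∈ Finset.range m, x i ≤ B) ∧
      ∀ I : Finset ℕ, I ⊆ Finset.range m → ∀ hI : I.Nonempty,
        g (∑ i ∈ I, x i) = c (I.max' hI) := by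
  induction m with
  | zero =>
    refine ⟨0, fun g => ⟨fun _ => 1, fun _ => Classical.arbitrary _, by simp, by simp,
      fun I hI hne => ?_⟩⟩
    rw [Finset.range_zero, Finset.subset_empty] at hI
    exact absurd (hI ▸ hne) (by simp)
  | succ m ih =>
    obtain ⟨B, hB⟩ := ih
    obtain ⟨W, hW⟩ := vdW_fin k B
    refine ⟨W, fun g => ?_⟩
    obtain ⟨a, d, c0, ha, hd, haW, hAP⟩ := hW g
    obtain ⟨y, c', hy1, hy2, hy3⟩ := hB (fun j => g (j * d))
    refine ⟨fun i => if i = m then a else y i * d, fun i => if i = m then c0 else c' i,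
      ?_, ?_, ?_⟩
    · intro i hi
      by_cases h : i = m
      · simpa [h] using ha
      · simp only [h, if_false]
        exact Nat.one_le_iff_ne_zero.2 (Nat.mul_ne_zero
          (Nat.one_le_iff_ne_zero.1 (hy1 i (by omega))) (Nat.one_le_iff_ne_zero.1 hd))
    · rw [Finset.sum_range_succ, if_pos rfl]
      have hrw : ∑ i ∈ Finset.range m, (if i = m then a else y i * d)
          = (∑ i ∈ Finset.range m, y i) * d := by
        rw [Finset.sum_mul]
        exact Finset.sum_congr rfl fun i hi => if_neg (by simp at hi; omega)
      rw [hrw]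
      calc (∑ i ∈ Finset.range m, y i) * d + a ≤ B * d + a :=
            Nat.add_le_add_right (Nat.mul_le_mul_right d hy2) a
        _ ≤ W := by omega
    · intro I hIsub hI
      have hle : ∀ i ∈ I, i ≤ m := fun i hi => by
        have := hIsub hi; simp at this; omega
      have hsumJ : ∀ J : Finset ℕ, J ⊆ Finset.range m →
          ∑ i ∈ J, (if i = m then a else y i * d) = (∑ i ∈ J, y i) * d := by
        intro J hJ
        rw [Finset.sum_mul]
        exact Finset.sum_congr rfl fun i hi => if_neg (by have := hJ hi; simp at this; omega)
      have hJB : ∀ J : Finset ℕ, J ⊆ Finset.range m → (∑ i ∈ J, y i) ≤ B :=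
        fun J hJ => le_trans (Finset.sum_le_sum_of_subset hJ) hy2
      by_cases hm : m ∈ I
      · have hmax : I.max' hI = m :=
          le_antisymm (Finset.max'_le _ _ _ hle) (Finset.le_max' _ _ hm)
        have herase : I.erase m ⊆ Finset.range m := by
          intro i hi
          simp only [Finset.mem_erase] at hi
          exact Finset.mem_range.2 (lt_of_le_of_ne (hle i hi.2) hi.1)
        rw [← Finset.add_sum_erase _ _ hm, if_pos rfl, hsumJ _ herase, hmax]
        simpa using hAP _ (hJB _ herase)
      · have hIsub' : I ⊆ Finset.range m := fun i hi =>
          Finset.mem_range.2 (lt_of_le_of_ne (hle i hi) (fun h => hm (h ▸ hi)))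
        have hmaxne : I.max' hI ≠ m := fun h =>
          hm (h ▸ Finset.max'_mem I hI)
        rw [hsumJ _ hIsub']
        simp only [hmaxne, if_false]
        exact hy3 I hIsub' hI

/-- Folkman–Sanders finite sums theorem, finitary form. -/

theorem finite_sums_theorem (k m : ℕ) :
    ∃ N : ℕ, ∀ f : ℕ → Fin k,
      ∃ x : Fin m → ℕ,
        (∀ i, x i ∈ Finset.Icc 1 N) ∧
        ∃ c : Fin k, ∀ I : Finset (Fin m), I.Nonempty →
          (∑ i ∈ I, x i) ∈ Finset.Icc 1 N ∧ f (∑ i ∈ I, x i) = c := by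
  rcases Nat.eq_zero_or_pos k with hk | hk
  · subst hk
    exact ⟨1, fun f => (f 0).elim0⟩
  haveI : Nonempty (Fin k) := ⟨⟨0, hk⟩⟩
  obtain ⟨B, hB⟩ := folkman_max k (k * m + 1)
  refine ⟨B, fun f => ?_⟩
  obtain ⟨x, c, hx1, hx2, hx3⟩ := hB f
  -- pigeonhole: some colour v has at least m indices in range (k*m+1)
  obtain ⟨v, -, hv⟩ := Finset.exists_lt_card_fiber_of_mul_lt_card_of_maps_to
    (s := Finset.range (k * m + 1)) (t := (Finset.univ : Finset (Fin k))) (f := c) (n := m)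
    (fun a _ => Finset.mem_univ _) (by simp [Nat.mul_comm])
  obtain ⟨T, hTsub, hTcard⟩ := Finset.exists_subset_card_eq (le_of_lt hv)
  set e := T.orderEmbOfFin hTcard with he
  have heT : ∀ j : Fin m, (e j : ℕ) ∈ T := fun j => T.orderEmbOfFin_mem hTcard j
  have heF : ∀ j : Fin m, (e j : ℕ) ∈ Finset.range (k * m + 1) ∧ c (e j) = v := by
    intro j
    have := hTsub (heT j)
    simpa [Finset.mem_filter] using this
  have hxB : ∀ i ∈ Finset.range (k * m + 1), x i ≤ B :=
    fun i hi => le_trans (Finset.single_le_sum (fun _ _ => Nat.zero_le _) hi) hx2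
  refine ⟨fun j => x (e j), ?_, v, ?_⟩
  · intro j
    rw [Finset.mem_Icc]
    have hj := heF j
    exact ⟨hx1 _ (Finset.mem_range.1 hj.1), hxB _ hj.1⟩
  · intro I hI
    set J : Finset ℕ := I.image (fun j => (e j : ℕ)) with hJ
    have hinj : Function.Injective (fun j : Fin m => (e j : ℕ)) := e.injective
    have hsum : ∑ i ∈ I, x (e i) = ∑ i ∈ J, x i := by
      rw [hJ, Finset.sum_image (fun a _ b _ h => hinj h)]
    have hJsub : J ⊆ Finset.range (k * m + 1) := by
      intro i hi
      rw [hJ, Finset.mem_image] at hi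
      obtain ⟨j, -, rfl⟩ := hi
      exact (heF j).1
    have hJne : J.Nonempty := hI.image _
    have hmax := Finset.max'_mem J hJne
    have hsub : ∑ i ∈ J, x i ≤ B :=
      le_trans (Finset.sum_le_sum_of_subset hJsub) hx2
    have hlow : 1 ≤ ∑ i ∈ J, x i := by
      obtain ⟨i, hi⟩ := hJne
      exact le_trans (hx1 i (Finset.mem_range.1 (hJsub hi)))
        (Finset.single_le_sum (fun _ _ => Nat.zero_le _) hi)
    have hcol : f (∑ i ∈ J, x i) = v := by
      rw [hx3 J hJsub hJne]
      obtain ⟨j, -, hje⟩ := Finset.mem_image.1 hmax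
      rw [← hje]
      exact (heF j).2
    rw [hsum]
    exact ⟨Finset.mem_Icc.2 ⟨hlow, hsub⟩, hcol⟩
end

section
/- Let k, r be positive integers, f_1,...,f_{r+1} : ℕ → Fin k be colourings, and c_1,...,c_r colours such that c_1,...,c_r is large with respect to f_1,...,f_r. Then there exists a colour c_{r+1} such that c_1,...,c_{r+1} is large with respect to f_1,...,f_{r+1}. -/
open Combinatorics Finset

/-- A bounded (finitary) version of van der Waerden's theorem, derived from the
Hales–Jewett theorem: there is `N` such that every `k`-colouring of `ℕ` admits a
monochromatic arithmetic progression of length `M` contained in `[0, N)`. -/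
lemma vdw_bounded (k M : ℕ) (hM : 0 < M) : ∃ N : ℕ, ∀ C : ℕ → Fin k,
    ∃ b d : ℕ, 0 < d ∧ ∃ c : Fin k, ∀ j < M, b + j * d < N ∧ C (b + j * d) = c := by
  haveI : NeZero M := ⟨hM.ne'⟩
  classical
  obtain ⟨ι, _inst, hι⟩ := Line.exists_mono_in_high_dimension (Fin M) (Fin k)
  refine ⟨Fintype.card ι * M + 1, fun C => ?_⟩
  obtain ⟨l, c, hl⟩ := hι fun v => C (∑ i, (v i : ℕ))
  set s : Finset ι := Finset.univ.filter (fun i => l.idxFun i = none) with hs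
  have hd : 0 < s.card := Finset.card_pos.mpr ⟨l.proper.choose, by
    rw [hs, Finset.mem_filter]; exact ⟨Finset.mem_univ _, l.proper.choose_spec⟩⟩
  refine ⟨∑ i ∈ sᶜ, (((l.idxFun i).map Fin.val).getD 0), s.card, hd, c, fun j hj => ?_⟩
  set x : Fin M := ⟨j, hj⟩ with hx
  have key : ∑ i, ((l x i : Fin M) : ℕ)
      = (∑ i ∈ sᶜ, (((l.idxFun i).map Fin.val).getD 0)) + j * s.card := by
    have h1 : ∑ i ∈ s, ((l x i : Fin M) : ℕ) = j * s.card := by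
      have hterm : ∀ i ∈ s, ((l x i : Fin M) : ℕ) = j := by
        intro i hi
        rw [hs, Finset.mem_filter] at hi
        show ((((l.idxFun i).getD x : Fin M)) : ℕ) = j
        rw [hi.2]
        rfl
      rw [Finset.sum_congr rfl hterm, Finset.sum_const, smul_eq_mul, mul_comm]
    have h2 : ∑ i ∈ sᶜ, ((l x i : Fin M) : ℕ)
        = ∑ i ∈ sᶜ, (((l.idxFun i).map Fin.val).getD 0) := by
      refine Finset.sum_congr rfl fun i hi => ?_
      rw [Finset.mem_compl, hs, Finset.mem_filter] at hi
      have hne : l.idxFun i ≠ none := fun hh => hi ⟨Finset.mem_univ _, hh⟩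
      obtain ⟨a, ha⟩ := Option.ne_none_iff_exists'.mp hne
      show ((((l.idxFun i).getD x : Fin M)) : ℕ) = _
      rw [ha]
      rfl
    rw [← Finset.sum_add_sum_compl s, h1, h2, add_comm]
  constructor
  · rw [← key]
    have : ∑ i, ((l x i : Fin M) : ℕ) ≤ ∑ _i : ι, (M - 1) := by
      refine Finset.sum_le_sum fun i _ => ?_
      exact Nat.le_sub_one_of_lt (l x i).isLt
    calc ∑ i, ((l x i : Fin M) : ℕ) ≤ Fintype.card ι * (M - 1) := by
          simpa using this
      _ ≤ Fintype.card ι * M := Nat.mul_le_mul_left _ (Nat.sub_le _ _)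
      _ < Fintype.card ι * M + 1 := Nat.lt_succ_self _
  · rw [← key]; exact hl x

/-- Extension lemma for large colour sequences: if c_1,…,c_r is large with
respect to f_1,…,f_r then there is c_{r+1} making c_1,…,c_{r+1} large with
respect to f_1,…,f_{r+1}. -/
theorem large_sequence_extension (k r : ℕ) (hk : 0 < k) (hr : 0 < r)
    (f : Fin (r + 1) → ℕ → Fin k) (c : Fin r → Fin k)
    (hlarge : ∀ M : ℕ, ∃ a d : ℕ, 0 < d ∧
      ∀ i : Fin r, ∀ j < M, f i.castSucc (a + j * d) = c i) :
    ∃ c' : Fin k, ∀ M : ℕ, ∃ a d : ℕ, 0 < d ∧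
      (∀ i : Fin r, ∀ j < M, f i.castSucc (a + j * d) = c i) ∧
      (∀ j < M, f (Fin.last r) (a + j * d) = c') := by
  set Good : Fin k → ℕ → Prop := fun c' M => ∃ a d : ℕ, 0 < d ∧
      (∀ i : Fin r, ∀ j < M, f i.castSucc (a + j * d) = c i) ∧
      (∀ j < M, f (Fin.last r) (a + j * d) = c') with hGood
  have hmono : ∀ c' M M', M' ≤ M → Good c' M → Good c' M' := by
    rintro c' M M' hle ⟨a, d, hd, h1, h2⟩
    exact ⟨a, d, hd, fun i j hj => h1 i j (hj.trans_le hle),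
      fun j hj => h2 j (hj.trans_le hle)⟩
  have hall : ∀ M, 0 < M → ∃ c', Good c' M := by
    intro M hM
    obtain ⟨N, hN⟩ := vdw_bounded k M hM
    obtain ⟨a0, d0, hd0, h0⟩ := hlarge N
    obtain ⟨b, d, hd, c', hbd⟩ := hN fun j => f (Fin.last r) (a0 + j * d0)
    refine ⟨c', a0 + b * d0, d * d0, Nat.mul_pos hd hd0, ?_, ?_⟩
    · intro i j hj
      have := h0 i (b + j * d) (hbd j hj).1
      rw [← this]; ring_nf
    · intro j hj
      have := (hbd j hj).2
      rw [← this]; ring_nf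
  by_contra h
  have h2 : ∀ c' : Fin k, ∃ M, ¬ Good c' M := by
    intro c'
    by_contra hc
    push_neg at hc
    exact h ⟨c', hc⟩
  choose Mbad hMbad using h2
  set M0 : ℕ := (Finset.univ.sup Mbad) + 1 with hM0
  obtain ⟨c', hc'⟩ := hall M0 (Nat.succ_pos _)
  exact hMbad c' (hmono c' M0 (Mbad c')
    (le_trans (Finset.le_sup (Finset.mem_univ c')) (Nat.le_succ _)) hc')
end

section
/- For every r ≥ 1 there exists a finite colouring f : ℕ → Fin (r+3) admitting no monochromatic pair {b, a^b} with a, b ≥ 2 and the r-fold iterated base-2 logarithm of a at most b. -/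
/-- The iterated-log ("log star") function: number of base-2 logs needed to reach ≤ 1. -/
def Lstar (n : ℕ) : ℕ :=
  if h : n ≤ 1 then 0 else Lstar (Nat.log 2 n) + 1
  decreasing_by exact Nat.log_lt_self 2 (by omega)

lemma Lstar_le_one {n : ℕ} (h : n ≤ 1) : Lstar n = 0 := by
  rw [Lstar]; simp [h]

lemma Lstar_eq {n : ℕ} (h : 2 ≤ n) : Lstar n = Lstar (Nat.log 2 n) + 1 := by
  rw [Lstar]; simp [show ¬ n ≤ 1 by omega]

lemma Lstar_le_log_succ (n : ℕ) : Lstar n ≤ Lstar (Nat.log 2 n) + 1 := by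
  by_cases h : n ≤ 1
  · rw [Lstar_le_one h]; omega
  · rw [Lstar_eq (by omega)]

lemma Lstar_mono : ∀ m n : ℕ, n ≤ m → Lstar n ≤ Lstar m := by
  intro m
  induction m using Nat.strong_induction_on with
  | _ m ih =>
    intro n hnm
    by_cases hn : n ≤ 1
    · rw [Lstar_le_one hn]; omega
    · have hm : 2 ≤ m := by omega
      rw [Lstar_eq (by omega : 2 ≤ n), Lstar_eq hm]
      have := ih (Nat.log 2 m) (Nat.log_lt_self 2 (by omega)) (Nat.log 2 n)
        (Nat.log_mono_right hnm)
      omega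

lemma Lstar_le_of_le_pow {x y : ℕ} (h : x ≤ 2 ^ y) : Lstar x ≤ Lstar y + 1 := by
  have h1 : Nat.log 2 x ≤ y := by
    calc Nat.log 2 x ≤ Nat.log 2 (2 ^ y) := Nat.log_mono_right h
    _ = y := Nat.log_pow (by norm_num) y
  calc Lstar x ≤ Lstar (Nat.log 2 x) + 1 := Lstar_le_log_succ x
  _ ≤ Lstar y + 1 := by have := Lstar_mono y (Nat.log 2 x) h1; omega

lemma Lstar_le_iter (a : ℕ) : ∀ k : ℕ, Lstar a ≤ Lstar ((Nat.log 2)^[k] a) + k := by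
  intro k
  induction k with
  | zero => simp
  | succ k ih =>
    rw [Function.iterate_succ']
    have := Lstar_le_log_succ ((Nat.log 2)^[k] a)
    simp only [Function.comp_apply]
    omega

lemma two_mul_le_two_pow {m : ℕ} (h : 2 ≤ m) : 2 * m ≤ 2 ^ m := by
  have h1 : m - 1 < 2 ^ (m - 1) := Nat.lt_two_pow_self (n := m - 1)
  have : 2 * m ≤ 2 * 2 ^ (m - 1) := by omega
  calc 2 * m ≤ 2 * 2 ^ (m - 1) := this
  _ = 2 ^ (m - 1 + 1) := by ring
  _ = 2 ^ m := by congr 1; omega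

/-- For every r ≥ 1 there is an (r+3)-colouring of ℕ with no monochromatic pair
{b, a^b} where a, b ≥ 2 and the r-fold iterated base-2 logarithm of a is at most b. -/
theorem log_star_colouring (r : ℕ) (hr : 1 ≤ r) :
    ∃ f : ℕ → Fin (r + 3), ∀ a b : ℕ, 2 ≤ a → 2 ≤ b →
      (Nat.log 2)^[r] a ≤ b → f b ≠ f (a ^ b) := by
  refine ⟨fun n => ⟨Lstar n % (r + 3), Nat.mod_lt _ (by omega)⟩, ?_⟩
  intro a b ha hb hlog hEq
  have hmodEq : Lstar b % (r + 3) = Lstar (a ^ b) % (r + 3) := congrArg Fin.val hEq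
  -- basic facts
  have hla : 1 ≤ Nat.log 2 a := by
    rw [Nat.le_log_iff_pow_le (by norm_num) (by omega)]; simpa using ha
  set la := Nat.log 2 a with hla_def
  -- lower bound : Lstar b + 1 ≤ Lstar (a ^ b)
  have hpow2 : 2 ^ b ≤ a ^ b := Nat.pow_le_pow_left ha b
  have hab2 : 2 ≤ a ^ b := le_trans (by have := Nat.lt_two_pow_self (n := b); omega) hpow2
  have hlogab : b ≤ Nat.log 2 (a ^ b) := by
    calc b = Nat.log 2 (2 ^ b) := (Nat.log_pow (by norm_num) b).symm
    _ ≤ Nat.log 2 (a ^ b) := Nat.log_mono_right hpow2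
  have hlower : Lstar b + 1 ≤ Lstar (a ^ b) := by
    rw [Lstar_eq hab2]
    have := Lstar_mono (Nat.log 2 (a ^ b)) b hlogab
    omega
  -- upper bound : Lstar (a ^ b) ≤ Lstar b + r + 2
  set m := max b la with hm_def
  have hmb : b ≤ m := le_max_left _ _
  have hmla : la ≤ m := le_max_right _ _
  have hm2 : 2 ≤ m := le_trans hb hmb
  have hstep1 : a ^ b ≤ 2 ^ (2 * la * b) := by
    have h1 : a ≤ 2 ^ (2 * la) := by
      have := Nat.lt_pow_succ_log_self (by norm_num : 1 < 2) a
      have h2 : 2 ^ (la + 1) ≤ 2 ^ (2 * la) := Nat.pow_le_pow_right (by norm_num) (by omega)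
      exact le_trans this.le h2
    calc a ^ b ≤ (2 ^ (2 * la)) ^ b := Nat.pow_le_pow_left h1 b
    _ = 2 ^ (2 * la * b) := by rw [← pow_mul]
  have hstep2 : 2 * la * b ≤ 2 ^ (2 * m) := by
    have h1 : 2 * b ≤ 2 ^ m := le_trans (by omega) (two_mul_le_two_pow hm2)
    have h2 : la ≤ 2 ^ m := le_trans hmla (Nat.lt_two_pow_self (n := m)).le
    calc 2 * la * b = (2 * b) * la := by ring
    _ ≤ 2 ^ m * 2 ^ m := Nat.mul_le_mul h1 h2
    _ = 2 ^ (2 * m) := by rw [← pow_add]; congr 1; omega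
  have hstep3 : 2 * m ≤ 2 ^ m := two_mul_le_two_pow hm2
  have hub1 : Lstar (a ^ b) ≤ Lstar (2 * la * b) + 1 := Lstar_le_of_le_pow hstep1
  have hub2 : Lstar (2 * la * b) ≤ Lstar (2 * m) + 1 := Lstar_le_of_le_pow hstep2
  have hub3 : Lstar (2 * m) ≤ Lstar m + 1 := Lstar_le_of_le_pow hstep3
  -- Lstar m + 1 ≤ Lstar b + r
  have hLa : Lstar a ≤ Lstar b + r := by
    have h1 := Lstar_le_iter a r
    have h2 := Lstar_mono b ((Nat.log 2)^[r] a) hlog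
    omega
  have hLm : Lstar m + 1 ≤ Lstar b + r := by
    rcases max_choice b la with h | h
    · rw [hm_def, h]; omega
    · rw [hm_def, h]
      have : Lstar la + 1 = Lstar a := (Lstar_eq ha).symm
      omega
  have hupper : Lstar (a ^ b) ≤ Lstar b + r + 2 := by omega
  -- contradiction from the congruence
  have hdvd : (r + 3) ∣ Lstar (a ^ b) - Lstar b :=
    (Nat.modEq_iff_dvd' (by omega)).mp hmodEq
  have hpos : 1 ≤ Lstar (a ^ b) - Lstar b := by omega
  have := Nat.le_of_dvd (by omega) hdvd
  omega
end

section
/- There exists a finite colouring of ℕ admitting no monochromatic pair {b, a^b} with 2 ≤ a and a ≤ 2^b (i.e. log a ≤ b) and b ≥ 2. In particular, there is a finite colouring with no monochromatic quadruple of the form {a, b, a^b, b^a} with a, b ≥ 2. -/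
/-- Iterated base-2 log height. -/
def Lh : ℕ → ℕ
  | n =>
    if h : n ≤ 1 then 0
    else 1 + Lh (Nat.log 2 n)
decreasing_by exact Nat.log_lt_self 2 (by omega)

lemma Lh_le_one {n : ℕ} (h : n ≤ 1) : Lh n = 0 := by
  rw [Lh]; simp [h]

lemma Lh_eq {n : ℕ} (h : 2 ≤ n) : Lh n = 1 + Lh (Nat.log 2 n) := by
  rw [Lh]; simp [Nat.not_le.mpr (by omega : 1 < n)]

lemma Lh_mono : ∀ n m : ℕ, m ≤ n → Lh m ≤ Lh n := by
  intro n
  induction n using Nat.strong_induction_on with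
  | _ n ih =>
    intro m hmn
    by_cases hm : m ≤ 1
    · simp [Lh_le_one hm]
    · have hn : 2 ≤ n := by omega
      rw [Lh_eq (by omega), Lh_eq hn]
      have h1 : Nat.log 2 m ≤ Nat.log 2 n := Nat.log_mono_right hmn
      have h2 : Nat.log 2 n < n := Nat.log_lt_self 2 (by omega)
      exact Nat.add_le_add_left (ih _ h2 _ h1) 1

lemma sq_lt : ∀ b : ℕ, 2 ≤ b → b * b < 2 ^ (b + 1) := by
  intro b hb
  induction b with
  | zero => omega
  | succ n ih =>
    rcases Nat.lt_or_ge n 2 with h | h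
    · interval_cases n <;> norm_num
    · have := ih h
      have h2 : 2 * n + 1 < 2 ^ (n + 1) := by
        have hn : n < 2 ^ n := Nat.lt_two_pow_self (n := n)
        have : 2 ^ (n + 1) = 2 * 2 ^ n := by rw [pow_succ]; ring
        omega
      have : (n + 1) * (n + 1) = n * n + (2 * n + 1) := by ring
      rw [pow_succ]
      omega


lemma key : ∀ a b : ℕ, 2 ≤ a → 2 ≤ b → a ≤ 2 ^ b → Lh b % 3 ≠ Lh (a ^ b) % 3 := by
  intro a b ha hb hab
  have hpow : 2 ^ b ≤ a ^ b := Nat.pow_le_pow_left ha b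
  have hpow2 : a ^ b ≤ 2 ^ (b * b) := by
    calc a ^ b ≤ (2 ^ b) ^ b := Nat.pow_le_pow_left hab b
      _ = 2 ^ (b * b) := by rw [← pow_mul]
  have hab2 : 2 ≤ a ^ b := le_trans (by nlinarith) hpow
  have hlog_lb : b ≤ Nat.log 2 (a ^ b) := Nat.le_log_of_pow_le one_lt_two hpow
  have hlog2 : 2 ≤ Nat.log 2 (a ^ b) := le_trans hb hlog_lb
  have hlog_ub : Nat.log 2 (a ^ b) ≤ b * b := by
    have := Nat.log_mono_right (b := 2) hpow2
    rwa [Nat.log_pow one_lt_two] at this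
  have hloglog : Nat.log 2 (Nat.log 2 (a ^ b)) ≤ b := by
    have h1 : Nat.log 2 (Nat.log 2 (a ^ b)) ≤ Nat.log 2 (b * b) :=
      Nat.log_mono_right hlog_ub
    have h2 : Nat.log 2 (b * b) < b + 1 :=
      Nat.log_lt_of_lt_pow (by positivity) (sq_lt b hb)
    omega
  have e1 : Lh (a ^ b) = 2 + Lh (Nat.log 2 (Nat.log 2 (a ^ b))) := by
    rw [Lh_eq hab2, Lh_eq hlog2]; omega
  have lb : Lh b + 1 ≤ Lh (a ^ b) := by
    rw [Lh_eq hab2]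
    have := Lh_mono _ _ hlog_lb
    omega
  have ub : Lh (a ^ b) ≤ Lh b + 2 := by
    rw [e1]
    have := Lh_mono _ _ hloglog
    omega
  omega

/-- There is a finite colouring of ℕ with no monochromatic pair {b, a^b} where
2 ≤ a ≤ 2^b and b ≥ 2; in particular none of the quadruples {a, b, a^b, b^a}
with a, b ≥ 2 is monochromatic. -/
theorem no_mono_pair_b_pow :
    ∃ (k : ℕ) (f : ℕ → Fin k),
      (∀ a b : ℕ, 2 ≤ a → 2 ≤ b → a ≤ 2 ^ b → f b ≠ f (a ^ b)) ∧
      (∀ a b : ℕ, 2 ≤ a → 2 ≤ b →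
        ¬(f a = f b ∧ f b = f (a ^ b) ∧ f (a ^ b) = f (b ^ a))) := by
  refine ⟨3, fun n => ⟨Lh n % 3, Nat.mod_lt _ (by norm_num)⟩, ?_, ?_⟩
  · intro a b ha hb hab hf
    exact key a b ha hb hab (by simpa using Fin.val_eq_of_eq hf)
  · intro a b ha hb ⟨h1, h2, h3⟩
    rcases le_total a b with h | h
    · have hab : a ≤ 2 ^ b := le_trans h (Nat.le_of_lt (Nat.lt_two_pow_self (n := b)))
      exact key a b ha hb hab (by simpa using Fin.val_eq_of_eq h2)
    · have hba : b ≤ 2 ^ a := le_trans h (Nat.le_of_lt (Nat.lt_two_pow_self (n := a)))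
      have : (⟨Lh a % 3, Nat.mod_lt _ (by norm_num)⟩ : Fin 3) = ⟨Lh (b ^ a) % 3, Nat.mod_lt _ (by norm_num)⟩ := h1.trans (h2.trans h3)
      exact key b a hb ha hba (by simpa using Fin.val_eq_of_eq this)
end

section
/- Let m ≥ 1 and R ⊆ [m] × [m] be a binary relation containing a directed cycle. Then the exponential pattern with shape R is not partition regular: there exists a finite colouring of ℕ such that no x_1,...,x_m > 1 make the set {x_1,...,x_m} ∪ {x_i^{x_j} : (i,j) ∈ R} monochromatic. -/
/-- Iterated binary logarithm: number of times `Nat.log 2` must be applied to reach `< 2`. -/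
def lstar : ℕ → ℕ
  | n =>
    if h : n < 2 then 0
    else lstar (Nat.log 2 n) + 1
  decreasing_by exact Nat.log_lt_self 2 (by omega)

lemma lstar_of_lt {n : ℕ} (h : n < 2) : lstar n = 0 := by
  rw [lstar]; simp [h]

lemma lstar_of_ge {n : ℕ} (h : 2 ≤ n) : lstar n = lstar (Nat.log 2 n) + 1 := by
  rw [lstar]; simp [Nat.not_lt.mpr h]

lemma lstar_two : lstar 2 = 1 := by
  rw [lstar_of_ge le_rfl,
    Nat.log_eq_of_pow_le_of_lt_pow (by norm_num) (by norm_num : (2:ℕ) < 2 ^ 2),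
    lstar_of_lt (by norm_num)]

lemma lstar_three : lstar 3 = 1 := by
  rw [lstar_of_ge (by norm_num),
    Nat.log_eq_of_pow_le_of_lt_pow (by norm_num) (by norm_num : (3:ℕ) < 2 ^ 2),
    lstar_of_lt (by norm_num)]

lemma lstar_mono : ∀ n : ℕ, ∀ m ≤ n, lstar m ≤ lstar n := by
  intro n
  induction n using Nat.strong_induction_on with
  | _ n ih =>
    intro m hmn
    by_cases hm : m < 2
    · simp [lstar_of_lt hm]
    · push_neg at hm
      have hn : 2 ≤ n := le_trans hm hmn
      rw [lstar_of_ge hm, lstar_of_ge hn]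
      have hlog : Nat.log 2 m ≤ Nat.log 2 n := Nat.log_mono_right hmn
      have hlt : Nat.log 2 n < n := Nat.log_lt_self 2 (by omega)
      exact Nat.add_le_add_right (ih _ hlt _ hlog) 1

lemma lstar_five : lstar 5 = 2 := by
  rw [lstar_of_ge (by norm_num),
    Nat.log_eq_of_pow_le_of_lt_pow (by norm_num : 2 ^ 2 ≤ 5) (by norm_num), lstar_two]

lemma lstar_sq : ∀ b : ℕ, 2 ≤ b → ∀ n ≤ b * b, lstar n ≤ lstar b + 1 := by
  intro b
  induction b using Nat.strong_induction_on with
  | _ b ih =>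
    intro hb n hn
    by_cases hn2 : n < 2
    · simp [lstar_of_lt hn2]
    · push_neg at hn2
      rw [lstar_of_ge hn2, lstar_of_ge hb]
      have hB1 : 1 ≤ Nat.log 2 b := by
        have h := Nat.log_mono_right (b := 2) (n := 2) hb
        rwa [Nat.log_eq_of_pow_le_of_lt_pow (by norm_num) (by norm_num : (2:ℕ) < 2 ^ 2)] at h
      set B := Nat.log 2 b with hBdef
      have hbb : b * b < 2 ^ (2 * B + 2) := by
        have h1 : b < 2 ^ (B + 1) := Nat.lt_pow_succ_log_self (by norm_num) b
        calc b * b < 2 ^ (B + 1) * 2 ^ (B + 1) := Nat.mul_lt_mul_of_lt_of_lt h1 h1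
          _ = 2 ^ (2 * B + 2) := by ring
      have hlogn : Nat.log 2 n ≤ 2 * B + 1 := by
        have h2 : n < 2 ^ (2 * B + 2) := lt_of_le_of_lt hn hbb
        have := Nat.log_lt_of_lt_pow (by omega) h2
        omega
      -- goal : lstar (Nat.log 2 n) + 1 ≤ lstar B + 1 + 1
      by_cases hB3 : 3 ≤ B
      · have h21 : 2 * B + 1 ≤ B * B := by nlinarith
        have := ih B (Nat.log_lt_self 2 (by omega)) (by omega) (Nat.log 2 n)
          (le_trans hlogn h21)
        omega
      · by_cases hB2 : B = 2
        · have hlog5 : Nat.log 2 n ≤ 5 := by omega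
          have l5 : lstar (Nat.log 2 n) ≤ lstar 5 := lstar_mono 5 _ hlog5
          rw [lstar_five] at l5
          rw [hB2, lstar_two] at *
          omega
        · have hB : B = 1 := by omega
          have hlog3 : Nat.log 2 n ≤ 3 := by omega
          have l3 : lstar (Nat.log 2 n) ≤ lstar 3 := lstar_mono 3 _ hlog3
          rw [lstar_three] at l3
          have e1 : lstar 1 = 0 := lstar_of_lt (by norm_num)
          rw [hB, e1]
          omega

/-- Key: for `2 ≤ a ≤ b`, `lstar (a^b)` is `lstar b + 1` or `lstar b + 2`. -/
lemma lstar_pow {a b : ℕ} (ha : 2 ≤ a) (hab : a ≤ b) :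
    lstar b + 1 ≤ lstar (a ^ b) ∧ lstar (a ^ b) ≤ lstar b + 2 := by
  have hb : 2 ≤ b := le_trans ha hab
  have hpow2 : 2 ^ b ≤ a ^ b := Nat.pow_le_pow_left ha b
  have hab2 : a ^ b ≤ 2 ^ (b * b) := by
    calc a ^ b ≤ (2 ^ b) ^ b :=
          Nat.pow_le_pow_left (le_trans hab (Nat.le_of_lt (Nat.lt_two_pow_self (n := b)))) b
      _ = 2 ^ (b * b) := by rw [← pow_mul]
  have hne : a ^ b ≠ 0 := by positivity
  have hL1 : b ≤ Nat.log 2 (a ^ b) :=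
    (Nat.le_log_iff_pow_le (by norm_num) hne).mpr hpow2
  have hL2 : Nat.log 2 (a ^ b) ≤ b * b := by
    have := Nat.log_mono_right (b := 2) hab2
    simpa [Nat.log_pow] using this
  have h4 : 2 ≤ a ^ b :=
    le_trans (le_trans (by norm_num : (2:ℕ) ≤ 2 ^ 1)
      (Nat.pow_le_pow_right (by norm_num) (by omega))) hpow2
  rw [lstar_of_ge h4]
  constructor
  · exact Nat.add_le_add_right (lstar_mono _ _ hL1) 1
  · have := lstar_sq b hb (Nat.log 2 (a ^ b)) hL2
    omega

/-- If the shape relation R contains a directed cycle, the exponential pattern with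
shape R is not partition regular. -/
theorem cycle_not_partition_regular (m : ℕ) (hm : 1 ≤ m)
    (R : Set (Fin m × Fin m))
    (hcyc : ∃ l : ℕ, 0 < l ∧ ∃ y : ℕ → Fin m,
      (∀ i < l, (y i, y (i + 1)) ∈ R) ∧ y l = y 0) :
    ∃ (k : ℕ) (f : ℕ → Fin k), ∀ x : Fin m → ℕ, (∀ i, 1 < x i) →
      ¬ ∃ c : Fin k, (∀ i, f (x i) = c) ∧
        ∀ p : Fin m × Fin m, p ∈ R → f (x p.1 ^ x p.2) = c := by
  refine ⟨3, fun n => ⟨lstar n % 3, Nat.mod_lt _ (by norm_num)⟩, ?_⟩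
  intro x hx
  rintro ⟨c, hvert, hedge⟩
  obtain ⟨l, hl, y, hedges, hcycle⟩ := hcyc
  obtain ⟨i0, hi0mem, hi0max⟩ :=
    (Finset.range l).exists_max_image (fun i => x (y (i + 1))) ⟨0, Finset.mem_range.mpr hl⟩
  rw [Finset.mem_range] at hi0mem
  set a := x (y i0) with hadef
  set b := x (y (i0 + 1)) with hbdef
  have ha2 : 2 ≤ a := hx _
  have hab : a ≤ b := by
    rcases Nat.eq_zero_or_pos i0 with h0 | hpos
    · have hy : y i0 = y ((l - 1) + 1) := by
        rw [h0, ← hcycle]; congr 1; omega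
      rw [hadef, hy]
      exact hi0max (l - 1) (Finset.mem_range.mpr (by omega))
    · have hy : y i0 = y ((i0 - 1) + 1) := by congr 1; omega
      rw [hadef, hy]
      exact hi0max (i0 - 1) (Finset.mem_range.mpr (by omega))
  have hkey := lstar_pow ha2 hab
  have hcb : (⟨lstar b % 3, Nat.mod_lt _ (by norm_num)⟩ : Fin 3) = c := hvert _
  have hcab : (⟨lstar (a ^ b) % 3, Nat.mod_lt _ (by norm_num)⟩ : Fin 3) = c :=
    hedge (y i0, y (i0 + 1)) (hedges i0 hi0mem)
  have hmod : lstar (a ^ b) % 3 = lstar b % 3 := by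
    have h := hcab.trans hcb.symm
    simpa using congrArg Fin.val h
  omega
end

section
/- There exists a finite colouring of ℕ (with 16 colours) for which there is no monochromatic set of the form {x, y, x+y, a, b, a^b} with x, y, a, b ∈ ℕ (and a, b ≥ 1). In other words, the Schur pattern {x, y, x+y} and the exponential pattern {a, b, a^b} are inconsistent. -/
/-- The largest `b` such that `n` is a `b`-th power (for `n ≥ 2`), computed as the gcd of
the exponents in the prime factorization of `n`. -/
noncomputable def expL (n : ℕ) : ℕ := Finset.gcd n.factorization.support n.factorization

lemma expL_dvd (n p : ℕ) : expL n ∣ n.factorization p := by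
  by_cases hp : p ∈ n.factorization.support
  · exact Finset.gcd_dvd hp
  · simp [Finsupp.notMem_support_iff.mp hp]

lemma exists_pow_of_dvd_expL {n d : ℕ} (hn : n ≠ 0) (hd : d ∣ expL n) :
    ∃ m, n = m ^ d := by
  refine ⟨∏ p ∈ n.factorization.support, p ^ (n.factorization p / d), ?_⟩
  rw [← Finset.prod_pow]
  conv_lhs => rw [← Nat.factorization_prod_pow_eq_self hn]
  rw [Finsupp.prod]
  refine Finset.prod_congr rfl fun p _ => ?_
  rw [← pow_mul, Nat.div_mul_cancel (hd.trans (expL_dvd n p))]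

lemma expL_pow {a b : ℕ} (ha : a ≠ 0) (hb : b ≠ 0) : expL (a ^ b) = b * expL a := by
  unfold expL
  rw [Nat.factorization_pow, Finsupp.support_smul_eq hb]
  have h : ∀ p ∈ a.factorization.support,
      (b • a.factorization) p = b * a.factorization p := fun p _ => rfl
  rw [Finset.gcd_congr rfl h, Finset.gcd_mul_left, normalize_eq]

/-- Schur triples and exponential triples are inconsistent: some 16-colouring of ℕ
admits no monochromatic set {x, y, x+y, a, b, a^b}. -/
theorem schur_exp_inconsistent :
    ∃ f : ℕ → Fin 16, ∀ x y a b : ℕ, 1 ≤ x → 1 ≤ y → 1 ≤ a → 1 ≤ b →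
      ¬(f x = f y ∧ f x = f (x + y) ∧ f x = f a ∧ f x = f b ∧ f x = f (a ^ b)) := by
  refine ⟨fun n => ⟨(n % 4) * 4 + (expL n % 4), by omega⟩, ?_⟩
  rintro x y a b hx hy ha hb ⟨h1, h2, h3, h4, h5⟩
  have key : ∀ m n : ℕ,
      (⟨(m % 4) * 4 + (expL m % 4), by omega⟩ : Fin 16) =
        ⟨(n % 4) * 4 + (expL n % 4), by omega⟩ →
      m % 4 = n % 4 ∧ expL m % 4 = expL n % 4 := by
    intro m n h
    have := congrArg Fin.val h
    simp only [Fin.val_mk] at this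
    omega
  obtain ⟨hxy1, hxy2⟩ := key _ _ h1
  obtain ⟨hs1, hs2⟩ := key _ _ h2
  obtain ⟨ha1, ha2⟩ := key _ _ h3
  obtain ⟨hb1, hb2⟩ := key _ _ h4
  obtain ⟨hp1, hp2⟩ := key _ _ h5
  -- From the Schur relation mod 4, x ≡ y ≡ 0 mod 4; also a ≡ b ≡ 0 mod 4.
  have hx4 : x % 4 = 0 := by omega
  have ha0 : a % 4 = 0 := by omega
  have hb0 : b % 4 = 0 := by omega
  -- hence a ≥ 4, b ≥ 4
  have ha4 : 4 ≤ a := by omega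
  have hb4 : 4 ≤ b := by omega
  -- expL (a ^ b) = b * expL a, and 4 ∣ b, so expL (a ^ b) ≡ 0 mod 4
  have hLp : expL (a ^ b) = b * expL a := expL_pow (by omega) (by omega)
  have hdb : (4 : ℕ) ∣ b * expL a := (show (4:ℕ) ∣ b by omega).mul_right _
  have hL0 : expL (a ^ b) % 4 = 0 := by
    rw [hLp]; omega
  -- so expL x ≡ expL y ≡ expL (x + y) ≡ 0 mod 4
  have hLx : 4 ∣ expL x := by omega
  have hLy : 4 ∣ expL y := by omega
  have hLxy : 4 ∣ expL (x + y) := by omega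
  obtain ⟨u, hu⟩ := exists_pow_of_dvd_expL (n := x) (by omega) hLx
  obtain ⟨v, hv⟩ := exists_pow_of_dvd_expL (n := y) (by omega) hLy
  obtain ⟨w, hw⟩ := exists_pow_of_dvd_expL (n := x + y) (by omega) hLxy
  have hu0 : u ≠ 0 := by rintro rfl; simp at hu; omega
  have hv0 : v ≠ 0 := by rintro rfl; simp at hv; omega
  have hw0 : w ≠ 0 := by rintro rfl; simp at hw; omega
  exact fermatLastTheoremFour u v w hu0 hv0 hw0 (by rw [← hu, ← hv, ← hw])
end

section
/- Let a_1 < a_2 < ... be a lacunary sequence of positive reals, i.e. liminf a_{n+1}/a_n > 1. Then there exists a finite colouring f of ℝ such that there is no monochromatic pair {x, x + a_n} with x ∈ ℝ and n ∈ ℕ. -/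
open Filter

private noncomputable def lacC (b : ℕ → ℝ) : ℕ → ℝ
  | 0 => 1 / (3 * b 0)
  | (m+1) => ((⌈lacC b m * b (m+1) - 1/3⌉ : ℝ) + 1/3) / b (m+1)

private lemma exists_t (b : ℕ → ℝ) (hb : ∀ m, 0 < b m)
    (hrat : ∀ m, 4 * b m ≤ b (m+1)) :
    ∃ t : ℝ, ∀ m, ∃ k : ℤ, (k:ℝ) + 1/3 ≤ t * b m ∧ t * b m ≤ (k:ℝ) + 2/3 := by
  set c := lacC b with hc
  -- c m * b m = k + 1/3 for some integer k
  have hform : ∀ m, ∃ k : ℤ, c m * b m = (k:ℝ) + 1/3 := by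
    intro m
    cases m with
    | zero =>
      exact ⟨0, by simp only [hc, lacC]; rw [div_mul_eq_mul_div, mul_comm 3 (b 0), ← div_div, one_mul, div_self (hb 0).ne']; norm_num⟩
    | succ m =>
      refine ⟨⌈c m * b (m+1) - 1/3⌉, ?_⟩
      have hbm := (hb (m+1)).ne'
      simp only [hc, lacC]
      rw [div_mul_cancel₀ _ (hb (m+1)).ne']
  -- one-step nesting
  have hstep : ∀ m, c m ≤ c (m+1) ∧ c (m+1) + 1/(3 * b (m+1)) ≤ c m + 1/(3 * b m) := by
    intro m
    have hB := hb (m+1)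
    have hbm := hb m
    set A := c m * b (m+1) with hA
    set k : ℤ := ⌈A - 1/3⌉ with hk
    have h1 : A ≤ (k:ℝ) + 1/3 := by have := Int.le_ceil (A - 1/3); linarith
    have h2 : (k:ℝ) + 2/3 ≤ A + b (m+1) / (3 * b m) := by
      have := Int.ceil_lt_add_one (A - 1/3)
      have hL : (4:ℝ)/3 ≤ b (m+1) / (3 * b m) := by
        rw [le_div_iff₀ (by positivity)]
        linarith [hrat m]
      linarith
    have hc1 : c (m+1) = ((k:ℝ) + 1/3) / b (m+1) := by simp only [hc, lacC, hk, hA]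
    constructor
    · rw [hc1, le_div_iff₀ hB]; exact h1
    · rw [hc1]
      have : ((k:ℝ) + 1/3) / b (m+1) + 1/(3 * b (m+1)) = ((k:ℝ) + 2/3) / b (m+1) := by
        field_simp; ring
      rw [this]
      rw [div_le_iff₀ hB]
      have heq : (c m + 1/(3 * b m)) * b (m+1) = A + b (m+1) / (3 * b m) := by
        field_simp [hA]; ring
      linarith [heq ▸ h2, heq]
  have hmono : Monotone c := monotone_nat_of_le_succ fun m => (hstep m).1
  have hnest : ∀ m j, m ≤ j → c j + 1/(3 * b j) ≤ c m + 1/(3 * b m) := by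
    intro m j hmj
    induction j with
    | zero => simp_all
    | succ j ih =>
      rcases Nat.lt_or_ge m (j+1) with h | h
      · exact le_trans (hstep j).2 (ih (Nat.lt_succ_iff.mp h))
      · have : m = j + 1 := le_antisymm hmj h
        subst this; rfl
  have hub : ∀ j, c j ≤ c 0 + 1/(3 * b 0) := by
    intro j
    have := hnest 0 j (Nat.zero_le j)
    have : c j + 1/(3 * b j) ≤ c 0 + 1/(3 * b 0) := this
    have hpos : (0:ℝ) < 1/(3 * b j) := div_pos one_pos (by linarith [hb j])
    linarith
  set t := sSup (Set.range c) with ht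
  have hne : (Set.range c).Nonempty := ⟨c 0, 0, rfl⟩
  have hbdd : BddAbove (Set.range c) := ⟨c 0 + 1/(3 * b 0), by rintro _ ⟨j, rfl⟩; exact hub j⟩
  have hlow : ∀ m, c m ≤ t := fun m => le_csSup hbdd ⟨m, rfl⟩
  have hhigh : ∀ m, t ≤ c m + 1/(3 * b m) := by
    intro m
    apply csSup_le hne
    rintro _ ⟨j, rfl⟩
    rcases le_total j m with h | h
    · have hpos : (0:ℝ) < 1/(3 * b m) := div_pos one_pos (by linarith [hb m])
      linarith [hmono h]
    · have hpos : (0:ℝ) < 1/(3 * b j) := div_pos one_pos (by linarith [hb j])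
      linarith [hnest m j h]
  refine ⟨t, fun m => ?_⟩
  obtain ⟨k, hk⟩ := hform m
  refine ⟨k, ?_, ?_⟩
  · calc (k:ℝ) + 1/3 = c m * b m := hk.symm
      _ ≤ t * b m := by gcongr; exact (hb m).le; exact hlow m
  · calc t * b m ≤ (c m + 1/(3 * b m)) * b m := by gcongr; exact (hb m).le; exact hhigh m
      _ = c m * b m + 1/3 := by field_simp [(hb m).ne']
      _ = (k:ℝ) + 2/3 := by rw [hk]; ring


private lemma floor_fract_ne (s u : ℝ) (k : ℤ)
    (hk1 : (k:ℝ) + 1/3 ≤ s) (hk2 : s ≤ (k:ℝ) + 2/3) :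
    ⌊3 * Int.fract u⌋ ≠ ⌊3 * Int.fract (u + s)⌋ := by
  intro h
  have hfu : Int.fract u = u - ⌊u⌋ := rfl
  have hfv : Int.fract (u + s) = u + s - ⌊u + s⌋ := rfl
  set m : ℤ := ⌊u + s⌋ - ⌊u⌋ with hm
  -- |3 fract(u+s) - 3 fract u| < 1
  have h1 : 3 * Int.fract u < (⌊3 * Int.fract u⌋ : ℝ) + 1 := Int.lt_floor_add_one _
  have h2 : ((⌊3 * Int.fract u⌋ : ℤ) : ℝ) ≤ 3 * Int.fract u := Int.floor_le _
  have h3 : 3 * Int.fract (u+s) < (⌊3 * Int.fract (u+s)⌋ : ℝ) + 1 := Int.lt_floor_add_one _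
  have h4 : ((⌊3 * Int.fract (u+s)⌋ : ℤ) : ℝ) ≤ 3 * Int.fract (u+s) := Int.floor_le _
  rw [h] at h1 h2
  have hd : |s - (m:ℝ)| < 1/3 := by
    have : Int.fract (u+s) - Int.fract u = s - (m:ℝ) := by
      rw [hfu, hfv, hm]; push_cast; ring
    rw [abs_lt]; constructor <;> nlinarith [this]
  rcases le_or_gt m k with h5 | h5
  · have : (m:ℝ) ≤ k := by exact_mod_cast h5
    rw [abs_lt] at hd; linarith [hd.2]
  · have : (k:ℝ) + 1 ≤ m := by exact_mod_cast h5
    rw [abs_lt] at hd; linarith [hd.1]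

private lemma zmod3_ne (u s : ℝ) (k : ℤ)
    (hk1 : (k:ℝ) + 1/3 ≤ s) (hk2 : s ≤ (k:ℝ) + 2/3) :
    ((⌊3 * Int.fract u⌋ : ℤ) : ZMod 3) ≠ ((⌊3 * Int.fract (u + s)⌋ : ℤ) : ZMod 3) := by
  intro h
  apply floor_fract_ne s u k hk1 hk2
  have hmod := (ZMod.intCast_eq_intCast_iff' _ _ _).mp h
  have hdvd : (3:ℤ) ∣ ⌊3 * Int.fract (u+s)⌋ - ⌊3 * Int.fract u⌋ := Int.ModEq.dvd hmod
  have b1 : (0:ℤ) ≤ ⌊3 * Int.fract u⌋ := Int.floor_nonneg.mpr (by nlinarith [Int.fract_nonneg u, Int.fract_nonneg (u+s)])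
  have b2 : ⌊3 * Int.fract u⌋ < 3 := by
    have := Int.fract_lt_one u
    have : 3 * Int.fract u < 3 := by linarith
    exact_mod_cast Int.floor_lt.mpr (by exact_mod_cast this)
  have b3 : (0:ℤ) ≤ ⌊3 * Int.fract (u+s)⌋ := Int.floor_nonneg.mpr (by nlinarith [Int.fract_nonneg u, Int.fract_nonneg (u+s)])
  have b4 : ⌊3 * Int.fract (u+s)⌋ < 3 := by
    have := Int.fract_lt_one (u+s)
    have : 3 * Int.fract (u+s) < 3 := by linarith
    exact_mod_cast Int.floor_lt.mpr (by exact_mod_cast this)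
  omega

/-- A lacunary sequence of positive reals admits a finite colouring of ℝ with no
monochromatic pair {x, x + a_n}. -/
theorem lacunary_no_mono_difference (a : ℕ → ℝ)
    (hpos : ∀ n, 0 < a n) (hmono : StrictMono a)
    (hlac : 1 < Filter.atTop.liminf (fun n => a (n + 1) / a n)) :
    ∃ (k : ℕ) (f : ℝ → Fin k), ∀ (x : ℝ) (n : ℕ), f x ≠ f (x + a n) := by
  classical
  set L := Filter.atTop.liminf (fun n => a (n + 1) / a n) with hL
  set q : ℝ := (1 + L) / 2 with hq
  have hq1 : 1 < q := by rw [hq]; linarith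
  have hqL : q < L := by rw [hq]; linarith
  have hbdd : IsBoundedUnder (· ≥ ·) atTop (fun n => a (n + 1) / a n) := by
    refine isBoundedUnder_of ⟨0, fun n => ?_⟩
    exact (div_pos (hpos (n+1)) (hpos n)).le
  have hev : ∀ᶠ n in atTop, q < a (n + 1) / a n :=
    eventually_lt_of_lt_liminf hqL hbdd
  obtain ⟨N, hN⟩ := eventually_atTop.mp hev
  have hgrow : ∀ n, N ≤ n → q * a n ≤ a (n + 1) := by
    intro n hn
    have := (hN n hn).le
    rw [le_div_iff₀ (hpos n)] at this
    linarith
  have hpow : ∀ (s n : ℕ), N ≤ n → q ^ s * a n ≤ a (n + s) := by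
    intro s
    induction s with
    | zero => intro n _; simp
    | succ s ih =>
      intro n hn
      have h1 : q ^ s * a n ≤ a (n + s) := ih n hn
      have h2 : q * a (n + s) ≤ a (n + s + 1) := hgrow (n + s) (le_trans hn (Nat.le_add_right _ _))
      calc q ^ (s+1) * a n = q * (q ^ s * a n) := by ring
        _ ≤ q * a (n + s) := by
            have := mul_le_mul_of_nonneg_left h1 (le_of_lt (lt_trans one_pos hq1))
            linarith [this]
        _ ≤ a (n + (s+1)) := by rw [← Nat.add_assoc]; exact h2
  obtain ⟨r, hr⟩ : ∃ r : ℕ, 4 < q ^ r := pow_unbounded_of_one_lt 4 hq1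
  have hr0 : 0 < r := by
    rcases Nat.eq_zero_or_pos r with h | h
    · subst h; norm_num at hr
    · exact h
  -- subsequences
  have hsub : ∀ i : Fin r, ∃ t : ℝ, ∀ m, ∃ k : ℤ,
      (k:ℝ) + 1/3 ≤ t * a (N + i + m * r) ∧ t * a (N + i + m * r) ≤ (k:ℝ) + 2/3 := by
    intro i
    apply exists_t (fun m => a (N + i + m * r)) (fun m => hpos _)
    intro m
    have h1 : q ^ r * a (N + i + m * r) ≤ a (N + i + m * r + r) :=
      hpow r (N + i + m * r) (Nat.le_add_right _ _ |>.trans (Nat.le_add_right _ _))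
    have h2 : N + i + (m + 1) * r = N + i + m * r + r := by ring
    rw [h2]
    nlinarith [hpos (N + i + m * r)]
  choose t ht using hsub
  -- the colouring
  set F : ℝ → (Fin N → ZMod 2) × (Fin r → ZMod 3) := fun x =>
    (fun j => ((⌊x / a j⌋ : ℤ) : ZMod 2),
     fun i => ((⌊3 * Int.fract (t i * x)⌋ : ℤ) : ZMod 3)) with hF
  refine ⟨Fintype.card ((Fin N → ZMod 2) × (Fin r → ZMod 3)),
    fun x => (Fintype.equivFin _) (F x), fun x n => ?_⟩
  intro hEq
  have hFne : F x = F (x + a n) := (Fintype.equivFin _).injective hEq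
  rcases Nat.lt_or_ge n N with hn | hn
  · -- parity coordinate n
    have := congrFun (congrArg Prod.fst hFne) ⟨n, hn⟩
    simp only [hF] at this
    have hfl : ⌊(x + a n) / a n⌋ = ⌊x / a n⌋ + 1 := by
      rw [add_div, div_self (hpos n).ne', Int.floor_add_one]
    rw [hfl] at this
    push_cast at this
    have : (1 : ZMod 2) = 0 := by
      have := left_eq_add.mp this
      exact this
    simp at this
  · -- zmod3 coordinate
    have hidx : N + (n - N) % r + (n - N) / r * r = n := by
      have h0 : (n - N) % r + (n - N) / r * r = n - N := Nat.mod_add_div' _ _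
      omega
    set i : Fin r := ⟨(n - N) % r, Nat.mod_lt _ hr0⟩
    obtain ⟨k, hk1, hk2⟩ := ht i ((n - N) / r)
    have hidx' : N + (i : ℕ) + (n - N) / r * r = n := hidx
    rw [hidx'] at hk1 hk2
    have := congrFun (congrArg Prod.snd hFne) i
    simp only [hF] at this
    have harg : t i * (x + a n) = t i * x + t i * a n := by ring
    rw [harg] at this
    exact zmod3_ne (t i * x) (t i * a n) k hk1 hk2 this
end

section
/- There exists a finite colouring of ℕ such that there is no monochromatic pair {a, a^{b^b}} with a = 2^s and b = 2^t for positive integers s, t. -/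
/-- For a sequence growing by factors ≥ 8, there is a real `α` with
`‖α * e j‖ ≥ 1/8` for all `j`. -/
private lemma exists_alpha (e : ℕ → ℕ) (h1 : ∀ j, 1 ≤ e j)
    (h8 : ∀ j, 8 * e j ≤ e (j + 1)) :
    ∃ α : ℝ, ∀ j, ∀ k : ℤ, 1 / 8 ≤ |α * (e j : ℝ) - (k : ℝ)| := by
  have hEpos : ∀ j, (0 : ℝ) < (e j : ℝ) := by
    intro j; exact_mod_cast (h1 j)
  have hE8 : ∀ j, 8 * (e j : ℝ) ≤ (e (j + 1) : ℝ) := by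
    intro j; exact_mod_cast (h8 j)
  -- nested interval left endpoints
  let a : ℕ → ℝ := fun n =>
    Nat.rec (1 / (8 * (e 0 : ℝ)))
      (fun j aj => ((⌈(e (j + 1) : ℝ) * aj⌉ : ℝ) + 1 / 8) / (e (j + 1) : ℝ)) n
  have ha0 : a 0 = 1 / (8 * (e 0 : ℝ)) := rfl
  have haS : ∀ j, a (j + 1) = ((⌈(e (j + 1) : ℝ) * a j⌉ : ℝ) + 1 / 8) / (e (j + 1) : ℝ) :=
    fun j => rfl
  have hexact : ∀ j, ∃ m : ℤ, (e j : ℝ) * a j = (m : ℝ) + 1 / 8 := by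
    intro j
    cases j with
    | zero =>
      refine ⟨0, ?_⟩
      rw [ha0]
      have := (hEpos 0).ne'
      field_simp
      ring
    | succ j =>
      refine ⟨⌈(e (j + 1) : ℝ) * a j⌉, ?_⟩
      rw [haS]
      have := (hEpos (j + 1)).ne'
      field_simp
  have hmono : ∀ j, a j ≤ a (j + 1) := by
    intro j
    rw [haS, le_div_iff₀ (hEpos (j + 1))]
    have h := Int.le_ceil ((e (j + 1) : ℝ) * a j)
    linarith
  have hstep : ∀ j, a (j + 1) + 1 / (2 * (e (j + 1) : ℝ)) ≤ a j + 1 / (2 * (e j : ℝ)) := by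
    intro j
    have hc := Int.ceil_lt_add_one ((e (j + 1) : ℝ) * a j)
    have hE := hEpos (j + 1)
    have hF := hEpos j
    have h8' := hE8 j
    have ha' : a (j + 1) ≤ a j + (9 / 8) / (e (j + 1) : ℝ) := by
      rw [haS, div_le_iff₀ hE]
      have : (a j + 9 / 8 / (e (j + 1) : ℝ)) * (e (j + 1) : ℝ)
          = (e (j + 1) : ℝ) * a j + 9 / 8 := by
        field_simp
      rw [this]
      linarith
    have h1' : (9 / 8) / (e (j + 1) : ℝ) + 1 / (2 * (e (j + 1) : ℝ))
        = (13 / 8) / (e (j + 1) : ℝ) := by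
      field_simp; ring
    have h2' : (13 / 8) / (e (j + 1) : ℝ) ≤ 1 / (2 * (e j : ℝ)) := by
      rw [div_le_div_iff₀ hE (by positivity)]
      linarith
    linarith
  have hamono : Monotone a := monotone_nat_of_le_succ hmono
  have hbanti : Antitone (fun j => a j + 1 / (2 * (e j : ℝ))) :=
    antitone_nat_of_succ_le hstep
  have hab : ∀ i j, a i ≤ a j + 1 / (2 * (e j : ℝ)) := by
    intro i j
    rcases le_total i j with h | h
    · have := hamono h
      have : a i ≤ a j := this
      have hp : (0:ℝ) < 1 / (2 * (e j : ℝ)) := by have := hEpos j; positivity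
      linarith
    · have h2 := hbanti h
      have h3 : a i ≤ a i + 1 / (2 * (e i : ℝ)) := by
        have : (0:ℝ) < 1 / (2 * (e i : ℝ)) := by have := hEpos i; positivity
        linarith
      exact h3.trans h2
  have hbdd : BddAbove (Set.range a) := by
    refine ⟨a 0 + 1 / (2 * (e 0 : ℝ)), ?_⟩
    rintro _ ⟨i, rfl⟩
    exact hab i 0
  set α := ⨆ j, a j with hα
  have hαl : ∀ j, a j ≤ α := fun j => le_ciSup hbdd j
  have hαu : ∀ j, α ≤ a j + 1 / (2 * (e j : ℝ)) := fun j => ciSup_le (fun i => hab i j)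
  refine ⟨α, ?_⟩
  intro j k
  obtain ⟨m, hm⟩ := hexact j
  have hE := hEpos j
  have hlow : (m : ℝ) + 1 / 8 ≤ α * (e j : ℝ) := by
    have := mul_le_mul_of_nonneg_right (hαl j) hE.le
    nlinarith
  have hhigh : α * (e j : ℝ) ≤ (m : ℝ) + 5 / 8 := by
    have h2 := mul_le_mul_of_nonneg_right (hαu j) hE.le
    have h3 : (a j + 1 / (2 * (e j : ℝ))) * (e j : ℝ) = (e j : ℝ) * a j + 1 / 2 := by
      field_simp
    nlinarith
  rcases le_or_gt k m with h | h
  · have hk : (k : ℝ) ≤ (m : ℝ) := by exact_mod_cast h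
    exact le_abs.mpr (Or.inl (by linarith))
  · have hk : (m : ℝ) + 1 ≤ (k : ℝ) := by exact_mod_cast h
    exact le_abs.mpr (Or.inr (by linarith))

/-- Colour of `m` induced by `α`. -/
private noncomputable def col (α : ℝ) (m : ℕ) : ℕ := (⌊8 * Int.fract (α * m)⌋).toNat

private lemma col_lt (α : ℝ) (m : ℕ) : col α m < 8 := by
  have h1 : Int.fract (α * m) < 1 := Int.fract_lt_one _
  have h2 : (0:ℝ) ≤ Int.fract (α * m) := Int.fract_nonneg _
  have h3 : ⌊8 * Int.fract (α * m)⌋ < 8 := by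
    apply Int.floor_lt.mpr
    push_cast
    linarith
  unfold col
  omega

private lemma col_eq_imp (α : ℝ) (u d : ℕ) (h : col α u = col α (u + d)) :
    ∃ k : ℤ, |α * (d : ℝ) - (k : ℝ)| < 1 / 8 := by
  have hnn1 : 0 ≤ ⌊8 * Int.fract (α * (u : ℝ))⌋ :=
    Int.floor_nonneg.mpr (mul_nonneg (by norm_num) (Int.fract_nonneg _))
  have hnn2 : 0 ≤ ⌊8 * Int.fract (α * ((u + d : ℕ) : ℝ))⌋ :=
    Int.floor_nonneg.mpr (mul_nonneg (by norm_num) (Int.fract_nonneg _))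
  have hfe : ⌊8 * Int.fract (α * (u : ℝ))⌋ = ⌊8 * Int.fract (α * ((u + d : ℕ) : ℝ))⌋ := by
    unfold col at h
    omega
  set x := α * (u : ℝ) with hx
  set y := α * ((u + d : ℕ) : ℝ) with hy
  have hxy : y - x = α * (d : ℝ) := by
    rw [hx, hy]; push_cast; ring
  refine ⟨⌊y⌋ - ⌊x⌋, ?_⟩
  have hbx1 : (⌊8 * Int.fract x⌋ : ℝ) ≤ 8 * Int.fract x := Int.floor_le _
  have hbx2 : 8 * Int.fract x < (⌊8 * Int.fract x⌋ : ℝ) + 1 := Int.lt_floor_add_one _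
  have hby1 : (⌊8 * Int.fract x⌋ : ℝ) ≤ 8 * Int.fract y := by
    rw [hfe]; exact Int.floor_le _
  have hby2 : 8 * Int.fract y < (⌊8 * Int.fract x⌋ : ℝ) + 1 := by
    rw [hfe]; exact Int.lt_floor_add_one _
  have hXf : (⌊x⌋ : ℝ) + Int.fract x = x := Int.floor_add_fract x
  have hYf : (⌊y⌋ : ℝ) + Int.fract y = y := Int.floor_add_fract y
  rw [abs_lt]
  constructor
  · push_cast
    linarith
  · push_cast
    linarith

/-- There is a finite colouring of ℕ with no monochromatic pair {a, a^(b^b)}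
with a = 2^s, b = 2^t, s, t ≥ 1. -/
theorem no_mono_a_pow_b_pow_b_powers_of_two :
    ∃ (k : ℕ) (f : ℕ → Fin k), ∀ s t : ℕ, 1 ≤ s → 1 ≤ t →
      f (2 ^ s) ≠ f ((2 ^ s) ^ ((2 ^ t) ^ (2 ^ t))) := by
  haveI : Fact (Nat.Prime 2) := ⟨Nat.prime_two⟩
  have hseq : ∀ i : ℕ, ∃ α : ℝ, ∀ j, ∀ k : ℤ,
      1 / 8 ≤ |α * (((3 * j + (i + 1)) * 2 ^ (3 * j + (i + 1)) : ℕ) : ℝ) - (k : ℝ)| := by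
    intro i
    apply exists_alpha
    · intro j
      have : 0 < 2 ^ (3 * j + (i + 1)) := pow_pos (by norm_num) _
      exact Nat.one_le_iff_ne_zero.mpr (by positivity)
    · intro j
      have hkey : ∀ n : ℕ, 8 * (n * 2 ^ n) ≤ (n + 3) * 2 ^ (n + 3) := by
        intro n
        calc 8 * (n * 2 ^ n) = n * (2 ^ n * 8) := by ring
          _ ≤ (n + 3) * (2 ^ n * 8) := Nat.mul_le_mul_right _ (by omega)
          _ = (n + 3) * 2 ^ (n + 3) := by rw [pow_add]; norm_num
      have heq : 3 * (j + 1) + (i + 1) = (3 * j + (i + 1)) + 3 := by omega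
      rw [heq]
      exact hkey _
  choose A hA using hseq
  set g : ℕ → ℕ := fun x => padicValNat 2 (padicValNat 2 x) with hg
  refine ⟨512, fun x => ⟨col (A 0) (g x) + 8 * col (A 1) (g x) + 64 * col (A 2) (g x), by
    have h0 := col_lt (A 0) (g x)
    have h1 := col_lt (A 1) (g x)
    have h2 := col_lt (A 2) (g x)
    omega⟩, ?_⟩
  intro s t hs ht hEq
  have hs0 : s ≠ 0 := by omega
  -- values of g
  have hgl : g (2 ^ s) = padicValNat 2 s := by
    simp [hg, padicValNat.prime_pow]
  have hx' : (2 ^ s) ^ ((2 ^ t) ^ (2 ^ t)) = 2 ^ (s * 2 ^ (t * 2 ^ t)) := by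
    rw [← pow_mul, ← pow_mul]
  have hgr : g ((2 ^ s) ^ ((2 ^ t) ^ (2 ^ t))) = padicValNat 2 s + t * 2 ^ t := by
    rw [hx', hg]
    simp only [padicValNat.prime_pow]
    rw [padicValNat.mul hs0 (by positivity), padicValNat.prime_pow]
  set m := padicValNat 2 s with hmdef
  -- extract component equalities
  have hval : col (A 0) (g (2 ^ s)) + 8 * col (A 1) (g (2 ^ s)) + 64 * col (A 2) (g (2 ^ s))
      = col (A 0) (g ((2 ^ s) ^ ((2 ^ t) ^ (2 ^ t))))
        + 8 * col (A 1) (g ((2 ^ s) ^ ((2 ^ t) ^ (2 ^ t))))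
        + 64 * col (A 2) (g ((2 ^ s) ^ ((2 ^ t) ^ (2 ^ t)))) := by
    have := congrArg Fin.val hEq
    simpa using this
  rw [hgl, hgr] at hval
  have hc0 := col_lt (A 0) m
  have hc1 := col_lt (A 1) m
  have hc2 := col_lt (A 2) m
  have hd0 := col_lt (A 0) (m + t * 2 ^ t)
  have hd1 := col_lt (A 1) (m + t * 2 ^ t)
  have hd2 := col_lt (A 2) (m + t * 2 ^ t)
  -- choose residue class
  obtain ⟨i, j, hi, hij⟩ : ∃ i j : ℕ, i < 3 ∧ 3 * j + (i + 1) = t :=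
    ⟨(t - 1) % 3, (t - 1) / 3, by omega, by omega⟩
  have hcol : col (A i) m = col (A i) (m + t * 2 ^ t) := by
    interval_cases i <;> omega
  obtain ⟨k, hk⟩ := col_eq_imp (A i) m (t * 2 ^ t) hcol
  have hcontra := hA i j k
  rw [hij] at hcontra
  linarith
end

section
/- There exists a finite colouring of ℕ such that there is no monochromatic pair {a, a^(b^(b^b))} with a, b > 1. -/
namespace NoMonoTower

/-- Number of prime factors with multiplicity. -/
def Om (n : ℕ) : ℕ := n.primeFactorsList.length

lemma Om_mul {a b : ℕ} (ha : a ≠ 0) (hb : b ≠ 0) : Om (a * b) = Om a + Om b := by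
  unfold Om
  rw [(Nat.perm_primeFactorsList_mul ha hb).length_eq, List.length_append]

lemma Om_pow {a : ℕ} (ha : a ≠ 0) (k : ℕ) : Om (a ^ k) = k * Om a := by
  induction k with
  | zero => simp [Om]
  | succ k ih => rw [pow_succ, Om_mul (pow_ne_zero _ ha) ha, ih]; ring

lemma Om_pos {a : ℕ} (ha : 2 ≤ a) : 1 ≤ Om a := by
  rcases Nat.eq_zero_or_pos (Om a) with h | h
  · exfalso
    have h2 : a.primeFactorsList = [] := List.length_eq_zero_iff.mp h
    rw [Nat.primeFactorsList_eq_nil] at h2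
    omega
  · exact h

lemma two_pow_Om_le {a : ℕ} (ha : a ≠ 0) : 2 ^ Om a ≤ a := by
  calc 2 ^ Om a ≤ a.primeFactorsList.prod :=
        List.pow_card_le_prod _ _ (fun x hx => (Nat.prime_of_mem_primeFactorsList hx).two_le)
    _ = a := Nat.prod_primeFactorsList ha

lemma Om_le_log {a : ℕ} (ha : a ≠ 0) : Om a ≤ Nat.log 2 a :=
  (Nat.le_log_iff_pow_le one_lt_two ha).mpr (two_pow_Om_le ha)

lemma Om_two : Om 2 = 1 := by
  unfold Om; rw [Nat.primeFactorsList_prime Nat.prime_two]; rfl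

lemma Om_five : Om 5 = 1 := by
  unfold Om; rw [Nat.primeFactorsList_prime (by norm_num)]; rfl

lemma Om_four : Om 4 = 2 := by
  have h : (4 : ℕ) = 2 ^ 2 := by norm_num
  rw [h, Om_pow (by norm_num), Om_two]

/-- The difference sequence `D b = b^b * Ω(b)`. -/
def D (b : ℕ) : ℕ := b ^ b * Om b

lemma D_two : D 2 = 4 := by unfold D; rw [Om_two]; norm_num

lemma D_ge {b : ℕ} (hb : 2 ≤ b) : 4 ≤ D b := by
  have h1 : 1 ≤ Om b := Om_pos hb
  have h2 : 4 ≤ b ^ b := by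
    calc (4:ℕ) = 2 ^ 2 := by norm_num
    _ ≤ b ^ 2 := Nat.pow_le_pow_left hb 2
    _ ≤ b ^ b := Nat.pow_le_pow_right (by omega) hb
  calc 4 = 4 * 1 := by norm_num
  _ ≤ b ^ b * Om b := Nat.mul_le_mul h2 h1

lemma pow_succ_ge {b : ℕ} (hb : 1 ≤ b) : ∀ n, 1 ≤ n → b ^ n + n * b ^ (n - 1) ≤ (b + 1) ^ n := by
  intro n
  induction n with
  | zero => omega
  | succ n ih =>
    intro _
    rcases Nat.eq_zero_or_pos n with h | h
    · subst h; simp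
    · have ihn := ih h
      have h2 : (b + 1) * (b ^ n + n * b ^ (n - 1)) ≤ (b + 1) ^ (n + 1) := by
        rw [pow_succ, mul_comm ((b+1)^n) (b+1)]; exact Nat.mul_le_mul_left _ ihn
      have hbn : b ^ (n - 1) * b = b ^ n := by
        rw [← pow_succ, Nat.sub_add_cancel h]
      simp only [Nat.add_sub_cancel]
      refine le_trans ?_ h2
      calc b ^ (n + 1) + (n + 1) * b ^ n
          = b * b ^ n + n * b ^ n + b ^ n := by rw [pow_succ]; ring
        _ ≤ b * b ^ n + n * b ^ n + b ^ n + n * b ^ (n - 1) := Nat.le_add_right _ _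
        _ = b * b ^ n + n * (b ^ (n - 1) * b) + b ^ n + n * b ^ (n - 1) := by rw [hbn]
        _ = (b + 1) * (b ^ n + n * b ^ (n - 1)) := by ring

lemma two_mul_pow_le {b : ℕ} (hb : 1 ≤ b) : 2 * b ^ b ≤ (b + 1) ^ b := by
  have h := pow_succ_ge hb b hb
  have hbb : b * b ^ (b - 1) = b ^ b := by
    rw [mul_comm, ← pow_succ, Nat.sub_add_cancel hb]
  rw [hbb] at h
  omega

lemma pow2_3k : ∀ k, 3 ≤ k → 3 * k ≤ 2 ^ k + 1 := by
  intro k hk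
  induction k, hk using Nat.le_induction with
  | base => norm_num
  | succ n hn ih =>
    have h2 : 2 ^ (n + 1) = 2 * 2 ^ n := by ring
    have h3 : (8:ℕ) = 2 ^ 3 := by norm_num
    have h4 : 2 ^ 3 ≤ 2 ^ n := Nat.pow_le_pow_right (by norm_num) hn
    omega

lemma log_bound {b : ℕ} (hb : 2 ≤ b) (hb4 : b ≠ 4) : 3 * Nat.log 2 b ≤ b + 1 := by
  set k := Nat.log 2 b with hk
  have h2k : 2 ^ k ≤ b := Nat.pow_log_le_self 2 (by omega)
  rcases Nat.lt_or_ge k 3 with h | h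
  · rcases Nat.lt_or_ge k 2 with h1 | h1
    · omega
    · have hk2 : k = 2 := by omega
      rw [hk2] at h2k; norm_num at h2k; omega
  · have := pow2_3k k h; omega

lemma lac {b : ℕ} (hb : 2 ≤ b) : 6 * D b ≤ D (b + 1) := by
  rcases eq_or_ne b 4 with rfl | hb4
  · have h4 : D 4 = 512 := by unfold D; rw [Om_four]; norm_num
    have h5 : D 5 = 3125 := by unfold D; rw [Om_five]; norm_num
    rw [h4, h5]; norm_num
  · have hlog : 3 * Om b ≤ b + 1 := le_trans (by
      have := Om_le_log (a := b) (by omega); omega) (log_bound hb hb4)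
    have h1 : 1 ≤ Om (b + 1) := Om_pos (by omega)
    have h2 : 2 * b ^ b ≤ (b + 1) ^ b := two_mul_pow_le (by omega)
    calc 6 * D b = (3 * Om b) * (2 * b ^ b) := by unfold D; ring
    _ ≤ (b + 1) * (b + 1) ^ b := Nat.mul_le_mul hlog h2
    _ = (b + 1) ^ (b + 1) := by rw [pow_succ]; ring
    _ = (b + 1) ^ (b + 1) * 1 := by ring
    _ ≤ (b + 1) ^ (b + 1) * Om (b + 1) := Nat.mul_le_mul_left _ h1
    _ = D (b + 1) := rfl


/-- Nested interval left endpoints. -/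
noncomputable def v : ℕ → ℝ
  | 0 => 1 / 16
  | (n + 1) => ((⌊(D (n + 3) : ℝ) * v n⌋ : ℝ) + 5 / 4) / (D (n + 3) : ℝ)

lemma Dr_pos {b : ℕ} (hb : 2 ≤ b) : (0 : ℝ) < (D b : ℝ) := by
  have := D_ge hb
  exact_mod_cast show (0:ℕ) < D b by omega

lemma Dr_lac {b : ℕ} (hb : 2 ≤ b) : 6 * (D b : ℝ) ≤ (D (b + 1) : ℝ) := by
  exact_mod_cast lac hb

lemma v_le_succ (n : ℕ) : v n ≤ v (n + 1) := by
  have hd : (0:ℝ) < (D (n + 3) : ℝ) := Dr_pos (by omega)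
  have hF : (D (n + 3) : ℝ) * v n - 1 < (⌊(D (n + 3) : ℝ) * v n⌋ : ℝ) :=
    Int.sub_one_lt_floor _
  show v n ≤ ((⌊(D (n + 3) : ℝ) * v n⌋ : ℝ) + 5 / 4) / (D (n + 3) : ℝ)
  rw [le_div_iff₀ hd]
  nlinarith

lemma v_nest (n : ℕ) :
    v (n + 1) + 1 / (2 * (D (n + 3) : ℝ)) ≤ v n + 1 / (2 * (D (n + 2) : ℝ)) := by
  have hd : (0:ℝ) < (D (n + 3) : ℝ) := Dr_pos (by omega)
  have he : (0:ℝ) < (D (n + 2) : ℝ) := Dr_pos (by omega)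
  have hde : 6 * (D (n + 2) : ℝ) ≤ (D (n + 3) : ℝ) := Dr_lac (by omega)
  have hF : (⌊(D (n + 3) : ℝ) * v n⌋ : ℝ) ≤ (D (n + 3) : ℝ) * v n := Int.floor_le _
  have hv1 : v (n + 1) = ((⌊(D (n + 3) : ℝ) * v n⌋ : ℝ) + 5 / 4) / (D (n + 3) : ℝ) := rfl
  rw [hv1]
  have hcomb : ((⌊(D (n + 3) : ℝ) * v n⌋ : ℝ) + 5 / 4) / (D (n + 3) : ℝ)
      + 1 / (2 * (D (n + 3) : ℝ))
      = ((⌊(D (n + 3) : ℝ) * v n⌋ : ℝ) + 7 / 4) / (D (n + 3) : ℝ) := by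
    field_simp
    ring
  rw [hcomb, div_le_iff₀ hd]
  have h3 : (3:ℝ) ≤ 1 / (2 * (D (n + 2) : ℝ)) * (D (n + 3) : ℝ) := by
    rw [div_mul_eq_mul_div, le_div_iff₀ (by positivity)]
    linarith
  nlinarith

lemma v_mono : Monotone v := monotone_nat_of_le_succ v_le_succ

lemma v_chain : ∀ i j : ℕ, i ≤ j →
    v j + 1 / (2 * (D (j + 2) : ℝ)) ≤ v i + 1 / (2 * (D (i + 2) : ℝ)) := by
  intro i j hij
  induction j, hij using Nat.le_induction with
  | base => exact le_refl _
  | succ n hn ih => exact le_trans (v_nest n) ih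

lemma v_bdd : BddAbove (Set.range v) := by
  refine ⟨v 0 + 1 / (2 * (D 2 : ℝ)), ?_⟩
  rintro x ⟨j, rfl⟩
  have h : v j + 1 / (2 * (D (j + 2) : ℝ)) ≤ v 0 + 1 / (2 * (D 2 : ℝ)) :=
    v_chain 0 j (Nat.zero_le j)
  have hp : (0:ℝ) < 1 / (2 * (D (j + 2) : ℝ)) := by
    have := Dr_pos (b := j + 2) (by omega); positivity
  linarith

/-- The parameter `t` with all `{D b · t}` in `[1/4, 3/4]`. -/
noncomputable def tstar : ℝ := ⨆ i, v i

lemma tstar_ge (i : ℕ) : v i ≤ tstar := le_ciSup v_bdd i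

lemma tstar_le (i : ℕ) : tstar ≤ v i + 1 / (2 * (D (i + 2) : ℝ)) := by
  refine ciSup_le fun j => ?_
  rcases le_total j i with h | h
  · have hp : (0:ℝ) < 1 / (2 * (D (i + 2) : ℝ)) := by
      have := Dr_pos (b := i + 2) (by omega); positivity
    have := v_mono h
    linarith
  · have hc := v_chain i j h
    have hp : (0:ℝ) < 1 / (2 * (D (j + 2) : ℝ)) := by
      have := Dr_pos (b := j + 2) (by omega); positivity
    linarith

lemma key_zero : ∃ m : ℤ,
    1 / 4 ≤ (D 2 : ℝ) * tstar - m ∧ (D 2 : ℝ) * tstar - m ≤ 3 / 4 := by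
  have h1 : v 0 ≤ tstar := tstar_ge 0
  have h2 : tstar ≤ v 0 + 1 / (2 * (D 2 : ℝ)) := tstar_le 0
  have hv0 : v 0 = 1 / 16 := rfl
  have hD : ((D 2 : ℕ) : ℝ) = 4 := by rw [D_two]; norm_num
  rw [hv0] at h1 h2
  rw [hD] at h2 ⊢
  refine ⟨0, ?_, ?_⟩ <;> (push_cast; linarith)

lemma key_succ (i : ℕ) : ∃ m : ℤ,
    1 / 4 ≤ (D (i + 3) : ℝ) * tstar - m ∧ (D (i + 3) : ℝ) * tstar - m ≤ 3 / 4 := by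
  have hd : (0:ℝ) < (D (i + 3) : ℝ) := Dr_pos (by omega)
  have h1 : v (i + 1) ≤ tstar := tstar_ge (i + 1)
  have h2 : tstar ≤ v (i + 1) + 1 / (2 * (D (i + 3) : ℝ)) := tstar_le (i + 1)
  have hv1 : v (i + 1) = ((⌊(D (i + 3) : ℝ) * v i⌋ : ℝ) + 5 / 4) / (D (i + 3) : ℝ) := rfl
  have hmul : (D (i + 3) : ℝ) * v (i + 1) = (⌊(D (i + 3) : ℝ) * v i⌋ : ℝ) + 5 / 4 := by
    rw [hv1, mul_div_cancel₀ _ (ne_of_gt hd)]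
  have hlow : (⌊(D (i + 3) : ℝ) * v i⌋ : ℝ) + 5 / 4 ≤ (D (i + 3) : ℝ) * tstar := by
    rw [← hmul]; exact mul_le_mul_of_nonneg_left h1 (le_of_lt hd)
  have hhigh : (D (i + 3) : ℝ) * tstar
      ≤ (⌊(D (i + 3) : ℝ) * v i⌋ : ℝ) + 5 / 4 + 1 / 2 := by
    have hmm := mul_le_mul_of_nonneg_left h2 (le_of_lt hd)
    rw [mul_add, hmul] at hmm
    have heq : (D (i + 3) : ℝ) * (1 / (2 * (D (i + 3) : ℝ))) = 1 / 2 := by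
      field_simp
    rw [heq] at hmm
    exact hmm
  refine ⟨⌊(D (i + 3) : ℝ) * v i⌋ + 1, ?_, ?_⟩ <;> (push_cast; linarith)

lemma key_b {b : ℕ} (hb : 2 ≤ b) : ∃ m : ℤ,
    1 / 4 ≤ (D b : ℝ) * tstar - m ∧ (D b : ℝ) * tstar - m ≤ 3 / 4 := by
  rcases Nat.exists_eq_add_of_le hb with ⟨i, rfl⟩
  cases i with
  | zero => exact key_zero
  | succ i =>
    have h := key_succ i
    have hidx : i + 3 = 2 + (i + 1) := by omega
    rwa [hidx] at h

/-- The colouring of ℕ. -/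
noncomputable def col (n : ℕ) : Fin 4 :=
  ⟨(⌊(n : ℝ) * (4 * tstar)⌋ % 4).toNat, by
    have h1 := Int.emod_nonneg ⌊(n : ℝ) * (4 * tstar)⌋ (by norm_num : (4:ℤ) ≠ 0)
    have h2 := Int.emod_lt_of_pos ⌊(n : ℝ) * (4 * tstar)⌋ (by norm_num : (0:ℤ) < 4)
    omega⟩

lemma col_ne (n : ℕ) {b : ℕ} (hb : 2 ≤ b) : col n ≠ col (n + D b) := by
  intro h
  obtain ⟨m, hm1, hm2⟩ := key_b hb
  set x : ℝ := (n : ℝ) * (4 * tstar) with hx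
  set r : ℝ := 4 * ((D b : ℝ) * tstar - m) with hr
  have hy : ((n + D b : ℕ) : ℝ) * (4 * tstar) = (x + r) + ((4 * m : ℤ) : ℝ) := by
    push_cast [hx, hr]; ring
  have hfy : ⌊((n + D b : ℕ) : ℝ) * (4 * tstar)⌋ = ⌊x + r⌋ + 4 * m := by
    rw [hy, Int.floor_add_intCast]
  have hr1 : (1:ℝ) ≤ r := by rw [hr]; linarith
  have hr3 : r ≤ 3 := by rw [hr]; linarith
  have hlow : ⌊x⌋ + 1 ≤ ⌊x + r⌋ := by
    have : ⌊x + (1:ℤ)⌋ ≤ ⌊x + r⌋ := Int.floor_le_floor (by push_cast; linarith)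
    rwa [Int.floor_add_intCast] at this
  have hhigh : ⌊x + r⌋ ≤ ⌊x⌋ + 3 := by
    have : ⌊x + r⌋ ≤ ⌊x + (3:ℤ)⌋ := Int.floor_le_floor (by push_cast; linarith)
    rwa [Int.floor_add_intCast] at this
  have hcol : (⌊x⌋ % 4).toNat = (⌊((n + D b : ℕ) : ℝ) * (4 * tstar)⌋ % 4).toNat :=
    congrArg Fin.val h
  rw [hfy] at hcol
  omega


end NoMonoTower

/-- There is a finite colouring of ℕ with no monochromatic pair {a, a^(b^(b^b))}
with a, b > 1. -/
theorem no_mono_a_pow_tower :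
    ∃ (k : ℕ) (f : ℕ → Fin k), ∀ a b : ℕ, 1 < a → 1 < b →
      f a ≠ f (a ^ (b ^ (b ^ b))) := by
  refine ⟨4, fun a => NoMonoTower.col (NoMonoTower.Om (NoMonoTower.Om a)), ?_⟩
  intro a b ha hb
  have ha0 : a ≠ 0 := by omega
  have hb0 : b ≠ 0 := by omega
  have hN0 : b ^ (b ^ b) ≠ 0 := pow_ne_zero _ hb0
  have hOa : NoMonoTower.Om a ≠ 0 := by
    have := NoMonoTower.Om_pos (a := a) (by omega); omega
  have e1 : NoMonoTower.Om (a ^ (b ^ (b ^ b))) = b ^ (b ^ b) * NoMonoTower.Om a :=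
    NoMonoTower.Om_pow ha0 _
  have e2 : NoMonoTower.Om (b ^ (b ^ b) * NoMonoTower.Om a)
      = NoMonoTower.Om (b ^ (b ^ b)) + NoMonoTower.Om (NoMonoTower.Om a) :=
    NoMonoTower.Om_mul hN0 hOa
  have e3 : NoMonoTower.Om (b ^ (b ^ b)) = NoMonoTower.D b := by
    rw [NoMonoTower.Om_pow hb0]; rfl
  have goal_eq : NoMonoTower.Om (NoMonoTower.Om (a ^ (b ^ (b ^ b))))
      = NoMonoTower.Om (NoMonoTower.Om a) + NoMonoTower.D b := by
    rw [e1, e2, e3, Nat.add_comm]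
  simp only [goal_eq]
  exact NoMonoTower.col_ne _ (show 2 ≤ b by omega)
end
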